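/- arXiv:1112.2065 — 4 statements merged into one kernel-verified Lean document; each statement's English description precedes it below -/
import Mathlib

section
/- Truncated termination over the weight: assume X is finite and < is a sequential monomial ordering of Σ, and let P be endowed with a monomial Σ-ordering. Let I ⊆ P be a w-graded Σ-ideal and fix δ ∈ Σ. If I has a w-homogeneous Σ-basis H such that H_δ = {f ∈ H : w(f) ≤ δ} is finite, then I has a w-homogeneous Gröbner Σ-basis G such that G_δ = {f ∈ G : w(f) ≤ δ} is finite. -/
/- Common setup: the monoid Σ = ⟨σ₁,…,σ_r⟩ ≅ (ℕ^r,+) is modelled additively as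
`Fin r → ℕ`; the algebra of partial difference polynomials `P = K[X(Σ)]` is the
polynomial ring `MvPolynomial (X × (Fin r → ℕ)) K`, and its monomials are elements
of `(X × (Fin r → ℕ)) →₀ ℕ`. -/

noncomputable section

/-- The total degree `deg : Σ → ℕ` of an element of the monoid `Σ ≅ ℕ^r`. -/
def degS {r : ℕ} (σ : Fin r → ℕ) : ℕ := ∑ i, σ i

/-- The shift action of `σ ∈ Σ` on monomials: `σ · ∏ xᵢ(τᵢ)^{aᵢ} = ∏ xᵢ(στᵢ)^{aᵢ}`. -/
def shiftMon {V : Type*} {r : ℕ} (σ : Fin r → ℕ) (m : (V × (Fin r → ℕ)) →₀ ℕ) :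
    (V × (Fin r → ℕ)) →₀ ℕ :=
  Finsupp.mapDomain (fun p => (p.1, σ + p.2)) m

/-- The shift action of `σ ∈ Σ` on `P` by `K`-algebra endomorphisms,
determined by `σ · x(τ) = x(στ)`. -/
def shiftPoly (K : Type*) [CommSemiring K] {V : Type*} {r : ℕ} (σ : Fin r → ℕ) :
    MvPolynomial (V × (Fin r → ℕ)) K →ₐ[K] MvPolynomial (V × (Fin r → ℕ)) K :=
  MvPolynomial.rename (fun p => (p.1, σ + p.2))

/-- The orbit set `Σ · G` of a set of polynomials `G`. -/
def shiftSet (K : Type*) [CommSemiring K] {V : Type*} {r : ℕ}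
    (G : Set (MvPolynomial (V × (Fin r → ℕ)) K)) :
    Set (MvPolynomial (V × (Fin r → ℕ)) K) :=
  {p | ∃ (σ : Fin r → ℕ) (g : MvPolynomial (V × (Fin r → ℕ)) K), g ∈ G ∧ p = shiftPoly K σ g}

/-- The least common multiple of two monomials (pointwise maximum of exponents). -/
def lcmMon {V : Type*} {r : ℕ} (m n : (V × (Fin r → ℕ)) →₀ ℕ) : (V × (Fin r → ℕ)) →₀ ℕ :=
  Finsupp.zipWith max (max_self 0) m n

/-- The greatest common divisor of two monomials (pointwise minimum of exponents). -/
def gcdMon {V : Type*} {r : ℕ} (m n : (V × (Fin r → ℕ)) →₀ ℕ) : (V × (Fin r → ℕ)) →₀ ℕ :=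
  Finsupp.zipWith min (min_self 0) m n

/-- The strict relation of a linear order given as a term. -/
def oLT {α : Type*} (lo : LinearOrder α) (a b : α) : Prop := lo.lt a b

/-- The non-strict relation of a linear order given as a term. -/
def oLE {α : Type*} (lo : LinearOrder α) (a b : α) : Prop := lo.le a b

/-- `lo` is a *monomial ordering* of an additive (monomial) monoid: a linear order
which is a well-order, has the monomial `1` (written additively: `0`) as least
element, and is compatible with multiplication (written additively). -/
structure IsMonOrd {α : Type*} [AddCommMonoid α] (lo : LinearOrder α) : Prop where
  wf : WellFounded (oLT lo)
  zero_le : ∀ a : α, oLE lo 0 a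
  add_lt : ∀ a b c : α, oLT lo a b → oLT lo (c + a) (c + b)

/-- The leading monomial of a polynomial with respect to a monomial ordering
(junk value `1`, i.e. `0`, on the zero polynomial). -/
def lmo {K V : Type*} [CommSemiring K] {r : ℕ} (lo : LinearOrder ((V × (Fin r → ℕ)) →₀ ℕ))
    (f : MvPolynomial (V × (Fin r → ℕ)) K) : (V × (Fin r → ℕ)) →₀ ℕ :=
  haveI : Decidable (f = 0) := Classical.dec _
  if h : f = 0 then 0
  else @Finset.max' _ lo f.support
    (Finset.nonempty_iff_ne_empty.2 fun he => h (MvPolynomial.support_eq_empty.mp he))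

/-- The leading coefficient of a polynomial. -/
def lco {K V : Type*} [CommSemiring K] {r : ℕ} (lo : LinearOrder ((V × (Fin r → ℕ)) →₀ ℕ))
    (f : MvPolynomial (V × (Fin r → ℕ)) K) : K :=
  MvPolynomial.coeff (lmo lo f) f

/-- The S-polynomial `spoly(f,g) = (l/lt(f))·f − (l/lt(g))·g`, where
`l = lcm(lm f, lm g)`. -/
def spoly {K V : Type*} [Field K] {r : ℕ} (lo : LinearOrder ((V × (Fin r → ℕ)) →₀ ℕ))
    (f g : MvPolynomial (V × (Fin r → ℕ)) K) : MvPolynomial (V × (Fin r → ℕ)) K :=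
  MvPolynomial.monomial (lcmMon (lmo lo f) (lmo lo g) - lmo lo f) (lco lo f)⁻¹ * f -
  MvPolynomial.monomial (lcmMon (lmo lo f) (lmo lo g) - lmo lo g) (lco lo g)⁻¹ * g

/-- `f` has a Gröbner representation `f = ∑ qᵢ gᵢ` with respect to `G`:
`gᵢ ∈ G` and `lm(f) ⪰ lm(qᵢ)·lm(gᵢ)` for all (nontrivial) `i`. -/
def HasGroebnerRep {K V : Type*} [Field K] {r : ℕ}
    (lo : LinearOrder ((V × (Fin r → ℕ)) →₀ ℕ))
    (G : Set (MvPolynomial (V × (Fin r → ℕ)) K))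
    (f : MvPolynomial (V × (Fin r → ℕ)) K) : Prop :=
  ∃ (n : ℕ) (q g : Fin n → MvPolynomial (V × (Fin r → ℕ)) K),
    (∀ i, g i ∈ G) ∧ f = ∑ i, q i * g i ∧
    ∀ i, q i ≠ 0 → g i ≠ 0 → oLE lo (lmo lo (q i) + lmo lo (g i)) (lmo lo f)

/-- The ideal `LM(S)` generated by the leading monomials of the nonzero elements
of `S`. -/
def lmIdeal {K V : Type*} [Field K] {r : ℕ} (lo : LinearOrder ((V × (Fin r → ℕ)) →₀ ℕ))
    (S : Set (MvPolynomial (V × (Fin r → ℕ)) K)) : Ideal (MvPolynomial (V × (Fin r → ℕ)) K) :=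
  Ideal.span ((fun g => (MvPolynomial.monomial (lmo lo g) (1 : K))) '' {g | g ∈ S ∧ g ≠ 0})

/-- `G ⊆ I` is a Gröbner basis of `I`: `LM(I)` is generated by `lm(G)`. -/
def IsGBasis {K V : Type*} [Field K] {r : ℕ} (lo : LinearOrder ((V × (Fin r → ℕ)) →₀ ℕ))
    (G : Set (MvPolynomial (V × (Fin r → ℕ)) K))
    (I : Ideal (MvPolynomial (V × (Fin r → ℕ)) K)) : Prop :=
  G ⊆ ↑I ∧ lmIdeal lo (I : Set (MvPolynomial (V × (Fin r → ℕ)) K)) = lmIdeal lo G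

/-- `G ⊆ I` is a Gröbner Σ-basis of `I`: `LM(I)` is generated by `Σ·lm(G)`. -/
def IsSigmaGBasis {K V : Type*} [Field K] {r : ℕ} (lo : LinearOrder ((V × (Fin r → ℕ)) →₀ ℕ))
    (G : Set (MvPolynomial (V × (Fin r → ℕ)) K))
    (I : Ideal (MvPolynomial (V × (Fin r → ℕ)) K)) : Prop :=
  G ⊆ ↑I ∧
  lmIdeal lo (I : Set (MvPolynomial (V × (Fin r → ℕ)) K)) =
    Ideal.span {p | ∃ (σ : Fin r → ℕ) (g : MvPolynomial (V × (Fin r → ℕ)) K),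
      g ∈ G ∧ g ≠ 0 ∧ p = MvPolynomial.monomial (shiftMon σ (lmo lo g)) (1 : K)}

/-- `I` is a Σ-ideal: it is invariant under all the shift endomorphisms. -/
def IsSigmaIdeal {K V : Type*} [CommSemiring K] {r : ℕ}
    (I : Ideal (MvPolynomial (V × (Fin r → ℕ)) K)) : Prop :=
  ∀ (σ : Fin r → ℕ) (p : MvPolynomial (V × (Fin r → ℕ)) K), p ∈ I → shiftPoly K σ p ∈ I

/-- The weight function `w : M → Σ̂ = Σ ∪ {0}` (here `Σ̂` is `WithBot (Fin r → ℕ)`,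
with `⊥` the extra element "0"):  `w(m)` is the `<`-maximum of the weights of the
variables occurring in `m`, where `<` is the given monomial ordering `loS` of `Σ`. -/
def wfun {V : Type*} {r : ℕ} (loS : LinearOrder (Fin r → ℕ))
    (m : (V × (Fin r → ℕ)) →₀ ℕ) : WithBot (Fin r → ℕ) :=
  @Finset.max _ loS (m.support.image (fun p => p.2))

/-- Addition in the idempotent semiring `Σ̂`: the maximum with respect to the
monomial ordering `loS` of `Σ`, with `⊥` as neutral element. -/
def hatAdd {r : ℕ} (loS : LinearOrder (Fin r → ℕ)) (a b : WithBot (Fin r → ℕ)) :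
    WithBot (Fin r → ℕ) :=
  @Max.max _ (@WithBot.linearOrder _ loS).toMax a b

/-- The order `≤` on `Σ̂` induced by the monomial ordering `loS` of `Σ`. -/
def hatLe {r : ℕ} (loS : LinearOrder (Fin r → ℕ)) (a b : WithBot (Fin r → ℕ)) : Prop :=
  @LE.le _ (@WithBot.linearOrder _ loS).toLE a b

/-- The strict order `<` on `Σ̂` induced by the monomial ordering `loS` of `Σ`. -/
def hatLt {r : ℕ} (loS : LinearOrder (Fin r → ℕ)) (a b : WithBot (Fin r → ℕ)) : Prop :=
  @LT.lt _ (@WithBot.linearOrder _ loS).toLT a b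

/-- The order function `ord : M → ℕ ∪ {−∞}`:  the maximum of `deg σ` over the
variables `x(σ)` occurring in `m` (and `−∞ = ⊥` for `m = 1`). -/
def ordFun {V : Type*} {r : ℕ} (m : (V × (Fin r → ℕ)) →₀ ℕ) : WithBot ℕ :=
  (m.support.image (fun p => degS p.2)).max

/-- A polynomial is `w`-homogeneous if all its monomials have the same weight. -/
def IsWHomog {K V : Type*} [CommSemiring K] {r : ℕ} (loS : LinearOrder (Fin r → ℕ))
    (f : MvPolynomial (V × (Fin r → ℕ)) K) : Prop :=
  ∀ m ∈ f.support, ∀ n ∈ f.support, wfun loS m = wfun loS n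

/-- A polynomial is `ord`-homogeneous if all its monomials have the same order. -/
def IsOrdHomog {K V : Type*} [CommSemiring K] {r : ℕ}
    (f : MvPolynomial (V × (Fin r → ℕ)) K) : Prop :=
  ∀ m ∈ f.support, ∀ n ∈ f.support, ordFun m = ordFun n

/-- The block `m(δ) ∈ M(δ) ≅ Mon(K[X])` of a monomial `m`, collecting the variables
of weight exactly `δ`. -/
def blockAt {X : Type*} {r : ℕ} (δ : Fin r → ℕ) (m : (X × (Fin r → ℕ)) →₀ ℕ) : X →₀ ℕ :=
  Finsupp.comapDomain (fun x => (x, δ)) m (fun _ _ _ _ h => congrArg Prod.fst h)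

/-- The weight Σ-ordering `≺_w` determined by a monomial ordering `ltS` of `Σ` and a
monomial ordering `lt1` of `P(1) = K[X(1)]` (transported to every block `P(δ)` via the
isomorphism `ρ(δ)`): compare the blocks of highest weight where the monomials differ. -/
def wlt {X : Type*} {r : ℕ} (ltS : (Fin r → ℕ) → (Fin r → ℕ) → Prop)
    (lt1 : (X →₀ ℕ) → (X →₀ ℕ) → Prop)
    (m n : (X × (Fin r → ℕ)) →₀ ℕ) : Prop :=
  ∃ δ : Fin r → ℕ, lt1 (blockAt δ m) (blockAt δ n) ∧
    ∀ ε : Fin r → ℕ, ltS δ ε → blockAt ε m = blockAt ε n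

/-- The block `m(x_j) ∈ M(x_j) ≅ Mon(K[x₀(Σ)])` of a monomial `m` (here `X = ℕ`),
collecting the variables of index exactly `j`. -/
def blockIdx {r : ℕ} (j : ℕ) (m : (ℕ × (Fin r → ℕ)) →₀ ℕ) : (Fin r → ℕ) →₀ ℕ :=
  Finsupp.comapDomain (fun σ => (j, σ)) m (fun _ _ _ _ h => congrArg Prod.snd h)

/-- The shift action of `σ ∈ Σ` on the monomials of `P(x₀) = K[x₀(Σ)]`. -/
def shiftMon0 {r : ℕ} (σ : Fin r → ℕ) (m : (Fin r → ℕ) →₀ ℕ) : (Fin r → ℕ) →₀ ℕ :=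
  Finsupp.mapDomain (fun τ => σ + τ) m

/-- The index Σ-ordering `≺_i` determined by a monomial Σ-ordering `lt0` of
`P(x₀) = K[x₀(Σ)]` (transported to every `P(x_j)` by the index shift): compare the
blocks of highest index where the monomials differ. -/
def ilt {r : ℕ} (lt0 : ((Fin r → ℕ) →₀ ℕ) → ((Fin r → ℕ) →₀ ℕ) → Prop)
    (m n : (ℕ × (Fin r → ℕ)) →₀ ℕ) : Prop :=
  ∃ j : ℕ, lt0 (blockIdx j m) (blockIdx j n) ∧ ∀ k : ℕ, j < k → blockIdx k m = blockIdx k n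

/- Homogenization setup:  `X̄ = X ∪ {t}` is modelled as `Option X`, with `none`
playing the role of the homogenizing variable `t` and `some x` that of `x ∈ X`;
thus `P̄ = K[X̄(Σ)] = MvPolynomial (Option X × (Fin r → ℕ)) K ⊇ P`. -/

/-- The inclusion `P = K[X(Σ)] ⊆ P̄ = K[X̄(Σ)]`. -/
def embP (K : Type*) [CommSemiring K] {X : Type*} {r : ℕ} :
    MvPolynomial (X × (Fin r → ℕ)) K →ₐ[K] MvPolynomial (Option X × (Fin r → ℕ)) K :=
  MvPolynomial.rename (fun p => (some p.1, p.2))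

/-- The inclusion `Mon(P) ⊆ Mon(P̄)` on monomials. -/
def embMon {X : Type*} {r : ℕ} (m : (X × (Fin r → ℕ)) →₀ ℕ) :
    (Option X × (Fin r → ℕ)) →₀ ℕ :=
  Finsupp.mapDomain (fun p => (some p.1, p.2)) m

/-- The dehomogenization Σ-endomorphism `φ : P̄ → P̄` with `x(σ) ↦ x(σ)`,
`t(σ) ↦ 1`. -/
def phiBar (K : Type*) [CommSemiring K] {X : Type*} {r : ℕ} :
    MvPolynomial (Option X × (Fin r → ℕ)) K →ₐ[K]
      MvPolynomial (Option X × (Fin r → ℕ)) K :=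
  MvPolynomial.aeval (fun p => p.1.elim 1 (fun x => MvPolynomial.X (some x, p.2)))

/-- The dehomogenization map `P̄ → P` with `x(σ) ↦ x(σ)`, `t(σ) ↦ 1`. -/
def dehom (K : Type*) [CommSemiring K] {X : Type*} {r : ℕ} :
    MvPolynomial (Option X × (Fin r → ℕ)) K →ₐ[K] MvPolynomial (X × (Fin r → ℕ)) K :=
  MvPolynomial.aeval (fun p => p.1.elim 1 (fun x => MvPolynomial.X (x, p.2)))

/-- `N`, the largest `ord`-graded Σ-ideal of `P̄` contained in `ker φ`: the ideal
generated by all `ord`-homogeneous elements of `ker φ`. -/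
def Nideal (K : Type*) [CommSemiring K] (X : Type*) (r : ℕ) :
    Ideal (MvPolynomial (Option X × (Fin r → ℕ)) K) :=
  Ideal.span {f | IsOrdHomog f ∧ phiBar K f = 0}

/-- The top order of a polynomial: the maximum of the orders of its monomials. -/
def topord {K V : Type*} [CommSemiring K] {r : ℕ}
    (f : MvPolynomial (V × (Fin r → ℕ)) K) : WithBot ℕ :=
  f.support.sup (fun m => ordFun m)

/-- The `ord`-homogenization `I*` of an ideal `I ⊆ P`: the ideal of `P̄` generated by
all `ord`-homogeneous elements of `φ⁻¹(I)`. -/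
def Istar {K : Type*} [Field K] {X : Type*} {r : ℕ}
    (I : Ideal (MvPolynomial (X × (Fin r → ℕ)) K)) :
    Ideal (MvPolynomial (Option X × (Fin r → ℕ)) K) :=
  Ideal.span {f | IsOrdHomog f ∧ dehom K f ∈ I}

/-- A monomial of `P̄` is `t`-free when it lies in `M = Mon(P)`. -/
def TFree {X : Type*} {r : ℕ} (m : (Option X × (Fin r → ℕ)) →₀ ℕ) : Prop :=
  ∀ p ∈ m.support, p.1 ≠ (none : Option X)

/-- A monomial of `P̄` is normal modulo `N` if it is of the form `m ∈ M`, or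
`t(σ)·n` with `n ∈ M`, `deg σ > ord n` and `t(σ)` the `≺`-least variable `t(τ)`
with `deg τ = deg σ`. -/
def NormalMon {X : Type*} {r : ℕ} (lo : LinearOrder ((Option X × (Fin r → ℕ)) →₀ ℕ))
    (m : (Option X × (Fin r → ℕ)) →₀ ℕ) : Prop :=
  TFree m ∨ ∃ (σ : Fin r → ℕ) (n : (Option X × (Fin r → ℕ)) →₀ ℕ),
    TFree n ∧ ordFun n < (degS σ : WithBot ℕ) ∧
    m = Finsupp.single ((none : Option X), σ) 1 + n ∧
    ∀ τ : Fin r → ℕ, degS τ = degS σ →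
      oLE lo (Finsupp.single ((none : Option X), σ) 1)
        (Finsupp.single ((none : Option X), τ) 1)

/-- `lo` is an `ord`-homogenization Σ-ordering of `P̄`: it is compatible with the
order function, and `t(σ)·m ≺ n` whenever `m, n ∈ M` and `deg σ = ord n > ord m`. -/
def IsHomogOrd {X : Type*} {r : ℕ}
    (lo : LinearOrder ((Option X × (Fin r → ℕ)) →₀ ℕ)) : Prop :=
  (∀ m n : (Option X × (Fin r → ℕ)) →₀ ℕ, ordFun m < ordFun n → oLT lo m n) ∧
  ∀ (m n : (Option X × (Fin r → ℕ)) →₀ ℕ) (σ : Fin r → ℕ),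
    TFree m → TFree n → (degS σ : WithBot ℕ) = ordFun n → ordFun m < ordFun n →
    oLT lo (Finsupp.single ((none : Option X), σ) 1 + m) n

end


section Aux11
open MvPolynomial

variable {K : Type*} [Field K] {X : Type*} {r : ℕ}

theorem s11_lmo_mem (lo : LinearOrder ((X × (Fin r → ℕ)) →₀ ℕ))
    {f : MvPolynomial (X × (Fin r → ℕ)) K} (hf : f ≠ 0) :
    lmo lo f ∈ f.support := by
  unfold lmo
  rw [dif_neg hf]
  exact @Finset.max'_mem _ lo _ _

theorem s11_le_lmo (lo : LinearOrder ((X × (Fin r → ℕ)) →₀ ℕ))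
    {f : MvPolynomial (X × (Fin r → ℕ)) K} {m} (hm : m ∈ f.support) :
    oLE lo m (lmo lo f) := by
  have hf : f ≠ 0 := by
    intro h; subst h; simp at hm
  unfold lmo
  rw [dif_neg hf]
  exact @Finset.le_max' _ lo _ _ hm

theorem s11_lmo_eq (lo : LinearOrder ((X × (Fin r → ℕ)) →₀ ℕ))
    {f : MvPolynomial (X × (Fin r → ℕ)) K} {m} (hm : m ∈ f.support)
    (h : ∀ n ∈ f.support, oLE lo n m) : lmo lo f = m := by
  have hf : f ≠ 0 := by
    intro hz; subst hz; simp at hm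
  exact @le_antisymm _ lo.toPartialOrder _ _ (h _ (s11_lmo_mem lo hf)) (s11_le_lmo lo hm)

theorem s11_shift_inj (σ : Fin r → ℕ) :
    Function.Injective (fun p : X × (Fin r → ℕ) => (p.1, σ + p.2)) := by
  rintro ⟨a, b⟩ ⟨c, d⟩ h
  simp only [Prod.mk.injEq] at h
  exact Prod.ext h.1 (by have := h.2; funext i; have := congrFun this i; simpa using this)

theorem s11_shiftMon_zero (m : (X × (Fin r → ℕ)) →₀ ℕ) : shiftMon 0 m = m := by
  unfold shiftMon
  have : (fun p : X × (Fin r → ℕ) => (p.1, (0 : Fin r → ℕ) + p.2)) = id := by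
    funext p; simp
  rw [this, Finsupp.mapDomain_id]

theorem s11_shiftPoly_ne (σ : Fin r → ℕ) {f : MvPolynomial (X × (Fin r → ℕ)) K}
    (hf : f ≠ 0) : shiftPoly K σ f ≠ 0 := by
  intro h
  apply hf
  have := MvPolynomial.rename_injective (R := K) _ (s11_shift_inj (X := X) σ)
  apply this
  simpa [shiftPoly] using h

theorem s11_mem_support_shiftPoly (σ : Fin r → ℕ) (f : MvPolynomial (X × (Fin r → ℕ)) K)
    (n : (X × (Fin r → ℕ)) →₀ ℕ) :
    n ∈ (shiftPoly K σ f).support ↔ ∃ m ∈ f.support, shiftMon σ m = n := by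
  classical
  unfold shiftPoly shiftMon
  rw [MvPolynomial.support_rename_of_injective (s11_shift_inj σ), Finset.mem_image]

theorem s11_lmo_shiftPoly (lo : LinearOrder ((X × (Fin r → ℕ)) →₀ ℕ))
    (hshift : ∀ (σ : Fin r → ℕ) (m n : (X × (Fin r → ℕ)) →₀ ℕ),
      oLT lo m n → oLT lo (shiftMon σ m) (shiftMon σ n))
    (σ : Fin r → ℕ) {f : MvPolynomial (X × (Fin r → ℕ)) K} (hf : f ≠ 0) :
    lmo lo (shiftPoly K σ f) = shiftMon σ (lmo lo f) := by
  classical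
  apply s11_lmo_eq lo
  · exact (s11_mem_support_shiftPoly σ f _).2 ⟨_, s11_lmo_mem lo hf, rfl⟩
  · intro n hn
    obtain ⟨m, hm, rfl⟩ := (s11_mem_support_shiftPoly σ f _).1 hn
    rcases @lt_or_eq_of_le _ lo.toPartialOrder _ _ (s11_le_lmo lo hm) with hlt | heq
    · exact @le_of_lt _ lo.toPreorder _ _ (hshift σ _ _ hlt)
    · rw [heq]
      exact @le_refl _ lo.toPreorder _

end Aux11
section Aux12
open MvPolynomial

variable {K : Type*} [Field K] {X : Type*} {r : ℕ}

theorem s11_mem_support_add {m n : (X × (Fin r → ℕ)) →₀ ℕ} {p : X × (Fin r → ℕ)} :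
    p ∈ (m + n).support ↔ p ∈ m.support ∨ p ∈ n.support := by
  simp only [Finsupp.mem_support_iff, Finsupp.add_apply]
  omega

theorem s11_max_union {β : Type*} [LinearOrder β] [DecidableEq β] (s t : Finset β) :
    (s ∪ t).max = Max.max s.max t.max := by
  apply le_antisymm
  · cases h : (s ∪ t).max with
    | bot => exact bot_le
    | coe a =>
      rcases Finset.mem_union.1 (Finset.mem_of_max h) with ha | ha
      · exact le_trans (Finset.le_max ha) (le_max_left _ _)
      · exact le_trans (Finset.le_max ha) (le_max_right _ _)
  · exact max_le (Finset.max_mono Finset.subset_union_left)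
      (Finset.max_mono Finset.subset_union_right)

theorem s11_wfun_add (loS : LinearOrder (Fin r → ℕ)) (m n : (X × (Fin r → ℕ)) →₀ ℕ) :
    wfun loS (m + n) = hatAdd loS (wfun loS m) (wfun loS n) := by
  classical
  letI := loS
  unfold wfun hatAdd
  rw [show (m + n).support = m.support ∪ n.support from by
    ext p
    rw [Finset.mem_union]
    exact s11_mem_support_add]
  rw [Finset.image_union]
  exact s11_max_union _ _

/-- restriction of a polynomial to the monomials satisfying `p` -/
noncomputable def s11_restr (p : ((X × (Fin r → ℕ)) →₀ ℕ) → Prop)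
    (f : MvPolynomial (X × (Fin r → ℕ)) K) : MvPolynomial (X × (Fin r → ℕ)) K :=
  haveI := Classical.decPred p
  ∑ m ∈ f.support.filter p, MvPolynomial.monomial m (MvPolynomial.coeff m f)

theorem s11_coeff_restr_pos (p : ((X × (Fin r → ℕ)) →₀ ℕ) → Prop)
    (f : MvPolynomial (X × (Fin r → ℕ)) K) {n : (X × (Fin r → ℕ)) →₀ ℕ} (h : p n) :
    MvPolynomial.coeff n (s11_restr p f) = MvPolynomial.coeff n f := by
  classical
  unfold s11_restr
  rw [MvPolynomial.coeff_sum]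
  rw [Finset.sum_eq_single n (fun m _ hmn => by simp [MvPolynomial.coeff_monomial, hmn])
    (fun hn => by
      by_cases h2 : MvPolynomial.coeff n f = 0
      · simp [h2]
      · exact absurd (Finset.mem_filter.2 ⟨MvPolynomial.mem_support_iff.2 h2, h⟩) hn)]
  simp [MvPolynomial.coeff_monomial]

theorem s11_coeff_restr_neg (p : ((X × (Fin r → ℕ)) →₀ ℕ) → Prop)
    (f : MvPolynomial (X × (Fin r → ℕ)) K) {n : (X × (Fin r → ℕ)) →₀ ℕ} (h : ¬ p n) :
    MvPolynomial.coeff n (s11_restr p f) = 0 := by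
  classical
  unfold s11_restr
  rw [MvPolynomial.coeff_sum]
  apply Finset.sum_eq_zero
  intro m hm
  have hp := (Finset.mem_filter.1 hm).2
  have hmn : m ≠ n := fun he => h (he ▸ hp)
  simp [MvPolynomial.coeff_monomial, hmn]

theorem s11_mem_support_restr (p : ((X × (Fin r → ℕ)) →₀ ℕ) → Prop)
    (f : MvPolynomial (X × (Fin r → ℕ)) K) (n : (X × (Fin r → ℕ)) →₀ ℕ) :
    n ∈ (s11_restr p f).support ↔ n ∈ f.support ∧ p n := by
  by_cases h1 : p n
  · simp only [MvPolynomial.mem_support_iff, s11_coeff_restr_pos p f h1, h1, and_true]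
  · simp only [MvPolynomial.mem_support_iff, s11_coeff_restr_neg p f h1, h1, and_false,
      ne_eq, not_true_eq_false, iff_false, not_not]

theorem s11_restr_add (p : ((X × (Fin r → ℕ)) →₀ ℕ) → Prop)
    (f g : MvPolynomial (X × (Fin r → ℕ)) K) :
    s11_restr p (f + g) = s11_restr p f + s11_restr p g := by
  apply MvPolynomial.ext
  intro n
  by_cases h1 : p n <;>
    simp [MvPolynomial.coeff_add, s11_coeff_restr_pos, s11_coeff_restr_neg, h1]

theorem s11_restr_eq_self (p : ((X × (Fin r → ℕ)) →₀ ℕ) → Prop)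
    {f : MvPolynomial (X × (Fin r → ℕ)) K} (h : ∀ m ∈ f.support, p m) :
    s11_restr p f = f := by
  apply MvPolynomial.ext
  intro n
  by_cases h1 : p n
  · rw [s11_coeff_restr_pos p f h1]
  · rw [s11_coeff_restr_neg p f h1]
    by_contra h2
    exact h1 (h n (MvPolynomial.mem_support_iff.2 fun he => h2 he.symm))

theorem s11_restr_eq_zero (p : ((X × (Fin r → ℕ)) →₀ ℕ) → Prop)
    {f : MvPolynomial (X × (Fin r → ℕ)) K} (h : ∀ m ∈ f.support, ¬ p m) :
    s11_restr p f = 0 := by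
  apply MvPolynomial.ext
  intro n
  rw [MvPolynomial.coeff_zero]
  by_cases h1 : p n
  · rw [s11_coeff_restr_pos p f h1]
    by_contra h2
    exact h n (MvPolynomial.mem_support_iff.2 h2) h1
  · exact s11_coeff_restr_neg p f h1

theorem s11_restr_add_restr_neg (p : ((X × (Fin r → ℕ)) →₀ ℕ) → Prop)
    (f : MvPolynomial (X × (Fin r → ℕ)) K) :
    s11_restr p f + s11_restr (fun m => ¬ p m) f = f := by
  apply MvPolynomial.ext
  intro n
  rw [MvPolynomial.coeff_add]
  by_cases h1 : p n
  · rw [s11_coeff_restr_pos p f h1, s11_coeff_restr_neg _ f (by simpa using h1), add_zero]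
  · rw [s11_coeff_restr_neg p f h1, s11_coeff_restr_pos _ f h1, zero_add]

end Aux12
section Aux13
open MvPolynomial

variable {K : Type*} [Field K] {X : Type*} {r : ℕ}

/-- the weight-μ component of a polynomial -/
noncomputable def s11_compW (loS : LinearOrder (Fin r → ℕ)) (μ : WithBot (Fin r → ℕ))
    (f : MvPolynomial (X × (Fin r → ℕ)) K) : MvPolynomial (X × (Fin r → ℕ)) K :=
  s11_restr (fun m => wfun loS m = μ) f

theorem s11_compW_mem (loS : LinearOrder (Fin r → ℕ))
    {I : Ideal (MvPolynomial (X × (Fin r → ℕ)) K)}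
    (hIgr : I = Ideal.span {f | f ∈ I ∧ IsWHomog loS f})
    {f : MvPolynomial (X × (Fin r → ℕ)) K} (hf : f ∈ I) (μ : WithBot (Fin r → ℕ)) :
    s11_compW loS μ f ∈ I := by
  classical
  have hf' : f ∈ Ideal.span {g | g ∈ I ∧ IsWHomog loS g} := hIgr ▸ hf
  have key : ∀ a μ', s11_compW loS μ' (a * f) ∈ I := by
    refine Submodule.span_induction
      (p := fun g _ => ∀ (a : MvPolynomial (X × (Fin r → ℕ)) K) (μ' : WithBot (Fin r → ℕ)),
        s11_compW loS μ' (a * g) ∈ I)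
      ?_ ?_ ?_ ?_ hf'
    · rintro x ⟨hxI, hxhom⟩ a μ'
      by_cases hx : x = 0
      · subst hx
        rw [mul_zero]
        unfold s11_compW
        rw [s11_restr_eq_zero _ (by simp)]
        exact I.zero_mem
      · obtain ⟨m₀, hm₀⟩ := Finset.nonempty_iff_ne_empty.2
          (fun he => hx (MvPolynomial.support_eq_empty.mp he))
        set τ := wfun loS m₀ with hτ
        set q := s11_restr (fun m => hatAdd loS (wfun loS m) τ = μ') a with hq
        set q' := s11_restr (fun m => ¬ hatAdd loS (wfun loS m) τ = μ') a with hq'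
        have hqq : q + q' = a := s11_restr_add_restr_neg _ a
        have hwx : ∀ n ∈ x.support, wfun loS n = τ := fun n hn => hxhom n hn m₀ hm₀
        have hmul : ∀ (b : MvPolynomial (X × (Fin r → ℕ)) K),
            ∀ m' ∈ (b * x).support, ∃ m ∈ b.support,
              wfun loS m' = hatAdd loS (wfun loS m) τ := by
          intro b m' hm'
          have := MvPolynomial.support_mul b x hm'
          obtain ⟨m, hm, n, hn, rfl⟩ := Finset.mem_add.1 this
          exact ⟨m, hm, by rw [s11_wfun_add, hwx n hn]⟩
        have h1 : s11_compW loS μ' (q * x) = q * x := by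
          apply s11_restr_eq_self
          intro m' hm'
          obtain ⟨m, hm, he⟩ := hmul q m' hm'
          rw [he]
          exact ((s11_mem_support_restr _ a m).1 hm).2
        have h2 : s11_compW loS μ' (q' * x) = 0 := by
          apply s11_restr_eq_zero
          intro m' hm'
          obtain ⟨m, hm, he⟩ := hmul q' m' hm'
          rw [he]
          exact ((s11_mem_support_restr _ a m).1 hm).2
        have : a * x = q * x + q' * x := by rw [← add_mul, hqq]
        rw [this]
        unfold s11_compW
        rw [s11_restr_add]
        unfold s11_compW at h1 h2
        rw [h1, h2, add_zero]
        exact Ideal.mul_mem_left I q hxI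
    · intro a μ'
      rw [mul_zero]
      unfold s11_compW
      rw [s11_restr_eq_zero _ (by simp)]
      exact I.zero_mem
    · intro x y _ _ hx hy a μ'
      rw [mul_add]
      unfold s11_compW
      rw [s11_restr_add]
      exact I.add_mem (hx a μ') (hy a μ')
    · intro b x _ hx a μ'
      rw [smul_eq_mul, ← mul_assoc]
      exact hx (a * b) μ'
  have := key 1 μ
  rwa [one_mul] at this

theorem s11_exists_homog (loS : LinearOrder (Fin r → ℕ))
    (lo : LinearOrder ((X × (Fin r → ℕ)) →₀ ℕ))
    {I : Ideal (MvPolynomial (X × (Fin r → ℕ)) K)}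
    (hIgr : I = Ideal.span {f | f ∈ I ∧ IsWHomog loS f})
    {f : MvPolynomial (X × (Fin r → ℕ)) K} (hf : f ∈ I) (h0 : f ≠ 0) :
    ∃ g, g ∈ I ∧ g ≠ 0 ∧ IsWHomog loS g ∧ lmo lo g = lmo lo f := by
  set μ := wfun loS (lmo lo f) with hμ
  set g := s11_compW loS μ f with hg
  have hmemg : ∀ n, n ∈ g.support ↔ n ∈ f.support ∧ wfun loS n = μ := fun n =>
    s11_mem_support_restr _ f n
  have hlmm : lmo lo f ∈ g.support := (hmemg _).2 ⟨s11_lmo_mem lo h0, rfl⟩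
  have hgne : g ≠ 0 := by
    intro he
    rw [he] at hlmm
    simp at hlmm
  refine ⟨g, s11_compW_mem loS hIgr hf μ, hgne, ?_, ?_⟩
  · intro m hm n hn
    rw [((hmemg m).1 hm).2, ((hmemg n).1 hn).2]
  · exact s11_lmo_eq lo hlmm (fun n hn => s11_le_lmo lo ((hmemg n).1 hn).1)

end Aux13
section Aux14
open MvPolynomial

variable {X : Type*} {r : ℕ}

theorem s11_dickson [Fintype X] (loS : LinearOrder (Fin r → ℕ)) (δ : Fin r → ℕ)
    (hseq : ∀ σ : Fin r → ℕ, {τ : Fin r → ℕ | oLE loS τ σ}.Finite)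
    (S : Set ((X × (Fin r → ℕ)) →₀ ℕ))
    (hsupp : ∀ m ∈ S, ∀ p ∈ m.support, oLE loS p.2 δ) :
    ∃ S₀ : Set ((X × (Fin r → ℕ)) →₀ ℕ), S₀ ⊆ S ∧ S₀.Finite ∧
      ∀ m ∈ S, ∃ s ∈ S₀, s ≤ m := by
  classical
  -- the finite set of relevant variables
  set F : Set (X × (Fin r → ℕ)) := Set.univ ×ˢ {τ : Fin r → ℕ | oLE loS τ δ} with hF
  have hFfin : F.Finite := Set.Finite.prod Set.finite_univ (hseq δ)
  haveI : Finite ↥F := hFfin.to_subtype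
  -- S is partially well ordered by ≤
  have hPWO : S.PartiallyWellOrderedOn (· ≤ ·) := by
    rw [Set.partiallyWellOrderedOn_iff_exists_lt]
    intro f hf
    have hpi : Set.PartiallyWellOrderedOn (Set.univ : Set (↥F → ℕ)) (· ≤ ·) :=
      Set.isPWO_of_wellQuasiOrderedLE _
    obtain ⟨a, b, hab, hle⟩ := hpi.exists_lt (f := fun n => fun p => f n ↑p) (fun n => Set.mem_univ _)
    refine ⟨a, b, hab, ?_⟩
    intro c
    by_cases hc : c ∈ (f a).support
    · have hcF : c ∈ F := by
        refine Set.mem_prod.2 ⟨Set.mem_univ _, hsupp _ (hf a) c hc⟩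
      exact hle ⟨c, hcF⟩
    · rw [Finsupp.notMem_support_iff.1 hc]
      exact Nat.zero_le _
  -- the set of minimal elements
  set S₀ : Set ((X × (Fin r → ℕ)) →₀ ℕ) := {m | m ∈ S ∧ ∀ n ∈ S, ¬ n < m} with hS₀
  have hsub : S₀ ⊆ S := fun m hm => hm.1
  have hwf : WellFounded ((· < ·) : ((X × (Fin r → ℕ)) →₀ ℕ) → _ → Prop) :=
    (inferInstance : WellFoundedLT ((X × (Fin r → ℕ)) →₀ ℕ)).wf
  refine ⟨S₀, hsub, ?_, ?_⟩
  · -- S₀ is a ≤-antichain, hence finite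
    have hanti : IsAntichain (· ≤ ·) S₀ := by
      intro a ha b hb hne hle
      exact hb.2 a ha.1 (lt_of_le_of_ne hle hne)
    exact hanti.finite_of_partiallyWellOrderedOn (hPWO.mono hsub)
  · intro m hm
    obtain ⟨t, ht, htmin⟩ := hwf.has_min {n | n ∈ S ∧ n ≤ m} ⟨m, hm, le_refl m⟩
    refine ⟨t, ⟨ht.1, ?_⟩, ht.2⟩
    intro n hn hlt
    exact htmin n ⟨hn, le_of_lt (lt_of_lt_of_le hlt ht.2)⟩ hlt

end Aux14

theorem s11_withbot_helper {β : Type*} [lino : LinearOrder β] {a b : β} {w : WithBot β}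
    (h1 : (a : WithBot β) ≤ w) (h2 : w ≤ (b : WithBot β)) : lino.le a b :=
  WithBot.coe_le_coe.1 (le_trans h1 h2)


/-- **truncated termination over the weight.** `X` finite, `<` a
sequential monomial ordering of `Σ`, `P` endowed with a monomial Σ-ordering. If a
`w`-graded Σ-ideal `I ⊆ P` has a `w`-homogeneous Σ-basis `H` with
`H_δ = {f ∈ H : w(f) ≤ δ}` finite, then `I` has a `w`-homogeneous Gröbner Σ-basis
`G` with `G_δ` finite. -/
theorem statement_11 {K : Type*} [Field K] {X : Type*} [Fintype X] {r : ℕ}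
    (loS : LinearOrder (Fin r → ℕ)) (hS : IsMonOrd loS)
    (hseq : ∀ σ : Fin r → ℕ, {τ : Fin r → ℕ | oLE loS τ σ}.Finite)
    (lo : LinearOrder ((X × (Fin r → ℕ)) →₀ ℕ)) (h : IsMonOrd lo)
    (hshift : ∀ (σ : Fin r → ℕ) (m n : (X × (Fin r → ℕ)) →₀ ℕ),
      oLT lo m n → oLT lo (shiftMon σ m) (shiftMon σ n))
    (I : Ideal (MvPolynomial (X × (Fin r → ℕ)) K))
    (hIsig : IsSigmaIdeal I)
    (hIgr : I = Ideal.span {f | f ∈ I ∧ IsWHomog loS f})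
    (δ : Fin r → ℕ)
    (H : Set (MvPolynomial (X × (Fin r → ℕ)) K))
    (hHI : H ⊆ ↑I)
    (hHhom : ∀ f ∈ H, IsWHomog loS f)
    (hHgen : I = Ideal.span (shiftSet K H))
    (hHfin : {f | f ∈ H ∧
      ∀ m ∈ f.support, hatLe loS (wfun loS m) (δ : WithBot (Fin r → ℕ))}.Finite) :
    ∃ G : Set (MvPolynomial (X × (Fin r → ℕ)) K),
      (∀ f ∈ G, IsWHomog loS f) ∧ IsSigmaGBasis lo G I ∧
      {f | f ∈ G ∧
        ∀ m ∈ f.support, hatLe loS (wfun loS m) (δ : WithBot (Fin r → ℕ))}.Finite := by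
  classical
  -- the set of leading monomials of small w-homogeneous elements of I
  set SetS : Set ((X × (Fin r → ℕ)) →₀ ℕ) :=
    {m | ∃ g, g ∈ I ∧ g ≠ 0 ∧ IsWHomog loS g ∧
      (∀ n ∈ g.support, hatLe loS (wfun loS n) (δ : WithBot (Fin r → ℕ))) ∧
      lmo lo g = m} with hSetS
  have hsupp : ∀ m ∈ SetS, ∀ p ∈ m.support, oLE loS p.2 δ := by
    rintro m ⟨g, hgI, hgne, hghom, hgsm, rfl⟩ p hp
    have h1 : hatLe loS (wfun loS (lmo lo g)) (δ : WithBot (Fin r → ℕ)) :=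
      hgsm _ (s11_lmo_mem lo hgne)
    have h2 : hatLe loS ((p.2 : Fin r → ℕ) : WithBot (Fin r → ℕ)) (wfun loS (lmo lo g)) :=
      @Finset.le_max _ loS _ _ (Finset.mem_image_of_mem (fun q => q.2) hp)
    exact s11_withbot_helper (lino := loS) h2 h1
  obtain ⟨S₀, hS₀sub, hS₀fin, hS₀min⟩ := s11_dickson loS δ hseq SetS hsupp
  have hchoice : ∀ s ∈ S₀, ∃ g, g ∈ I ∧ g ≠ 0 ∧ IsWHomog loS g ∧
      (∀ n ∈ g.support, hatLe loS (wfun loS n) (δ : WithBot (Fin r → ℕ))) ∧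
      lmo lo g = s := fun s hs => hS₀sub hs
  choose gsel hg1 hg2 hg3 hg4 hg5 using hchoice
  haveI : Finite ↥S₀ := hS₀fin.to_subtype
  set Gs : Set (MvPolynomial (X × (Fin r → ℕ)) K) :=
    Set.range (fun s : ↥S₀ => gsel ↑s s.2) with hGs
  set Gb : Set (MvPolynomial (X × (Fin r → ℕ)) K) :=
    {g | g ∈ I ∧ g ≠ 0 ∧ IsWHomog loS g ∧
      ¬ (∀ n ∈ g.support, hatLe loS (wfun loS n) (δ : WithBot (Fin r → ℕ)))} with hGb
  have hGI : Gs ∪ Gb ⊆ (I : Set (MvPolynomial (X × (Fin r → ℕ)) K)) := by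
    rintro f (⟨s, rfl⟩ | hf)
    · exact hg1 _ _
    · exact hf.1
  refine ⟨Gs ∪ Gb, ?_, ⟨hGI, ?_⟩, ?_⟩
  · rintro f (⟨s, rfl⟩ | hf)
    · exact hg3 _ _
    · exact hf.2.2.1
  · -- the leading monomial ideal equality
    apply le_antisymm
    · refine Ideal.span_le.2 ?_
      rintro p ⟨f, ⟨hfI, hfne⟩, rfl⟩
      dsimp only
      obtain ⟨g, hgI, hgne, hghom, hlmo⟩ := s11_exists_homog loS lo hIgr hfI hfne
      by_cases hsm : ∀ n ∈ g.support, hatLe loS (wfun loS n) (δ : WithBot (Fin r → ℕ))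
      · have hmem : lmo lo g ∈ SetS := ⟨g, hgI, hgne, hghom, hsm, rfl⟩
        obtain ⟨s, hsS₀, hle⟩ := hS₀min _ hmem
        have hkey : MvPolynomial.monomial (shiftMon 0 (lmo lo (gsel s hsS₀))) (1 : K) ∈
            {p | ∃ (σ : Fin r → ℕ) (g : MvPolynomial (X × (Fin r → ℕ)) K),
              g ∈ Gs ∪ Gb ∧ g ≠ 0 ∧
              p = MvPolynomial.monomial (shiftMon σ (lmo lo g)) (1 : K)} :=
          ⟨0, gsel s hsS₀, Or.inl ⟨⟨s, hsS₀⟩, rfl⟩, hg2 _ _, rfl⟩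
        have heq : (MvPolynomial.monomial (lmo lo f) (1 : K)) =
            MvPolynomial.monomial (lmo lo g - s) (1 : K) *
              MvPolynomial.monomial (shiftMon 0 (lmo lo (gsel s hsS₀))) (1 : K) := by
          rw [s11_shiftMon_zero, hg5 s hsS₀, MvPolynomial.monomial_mul, one_mul,
            tsub_add_cancel_of_le hle, hlmo]
        rw [heq]
        exact SetLike.mem_coe.2 (Ideal.mul_mem_left _ _ (Ideal.subset_span hkey))
      · have hkey : MvPolynomial.monomial (shiftMon 0 (lmo lo g)) (1 : K) ∈
            {p | ∃ (σ : Fin r → ℕ) (g : MvPolynomial (X × (Fin r → ℕ)) K),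
              g ∈ Gs ∪ Gb ∧ g ≠ 0 ∧
              p = MvPolynomial.monomial (shiftMon σ (lmo lo g)) (1 : K)} :=
          ⟨0, g, Or.inr ⟨hgI, hgne, hghom, hsm⟩, hgne, rfl⟩
        have heq : (MvPolynomial.monomial (lmo lo f) (1 : K)) =
            MvPolynomial.monomial (shiftMon 0 (lmo lo g)) (1 : K) := by
          rw [s11_shiftMon_zero, hlmo]
        rw [heq]
        exact SetLike.mem_coe.2 (Ideal.subset_span hkey)
    · refine Ideal.span_le.2 ?_
      rintro p ⟨σ, g, hgG, hgne, rfl⟩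
      have hgI : g ∈ I := hGI hgG
      have h1 : shiftPoly K σ g ∈ I := hIsig σ g hgI
      have h2 : shiftPoly K σ g ≠ 0 := s11_shiftPoly_ne σ hgne
      have h3 : lmo lo (shiftPoly K σ g) = shiftMon σ (lmo lo g) :=
        s11_lmo_shiftPoly lo hshift σ hgne
      have : MvPolynomial.monomial (shiftMon σ (lmo lo g)) (1 : K) ∈
          (fun g => (MvPolynomial.monomial (lmo lo g) (1 : K))) ''
            {g | g ∈ (I : Set (MvPolynomial (X × (Fin r → ℕ)) K)) ∧ g ≠ 0} :=
        ⟨shiftPoly K σ g, ⟨h1, h2⟩, by dsimp only; rw [h3]⟩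
      exact SetLike.mem_coe.2 (Ideal.subset_span this)
  · -- finiteness of the truncation
    apply Set.Finite.subset (Set.finite_range (fun s : ↥S₀ => gsel ↑s s.2))
    rintro f ⟨hfG | hfb, hsm⟩
    · exact hfG
    · exact absurd hsm hfb.2.2.2
end

section
/- Let ≺_w be a weight Σ-ordering of P, defined from a monomial ordering < of Σ and a monomial ordering of P(1) = K[X(1)] extended by blocks in decreasing weight order. Then ≺_w is compatible with the weight function: w(m) < w(n) implies m ≺_w n for all monomials m, n ∈ M. If moreover the monomial ordering < of Σ is compatible with deg (i.e., deg(σ) < deg(τ) implies σ < τ), then ≺_w is also compatible with the order function: ord(m) < ord(n) implies m ≺_w n. -/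
/-- A weight Σ-ordering `≺_w` is compatible with the weight
function: `w(m) < w(n)` implies `m ≺_w n`. If moreover the monomial ordering of `Σ`
is compatible with `deg`, then `≺_w` is also compatible with the order function:
`ord(m) < ord(n)` implies `m ≺_w n`. -/
theorem statement_14 {X : Type*} [Countable X] {r : ℕ}
    (loS : LinearOrder (Fin r → ℕ)) (hS : IsMonOrd loS)
    (lo1 : LinearOrder (X →₀ ℕ)) (h1 : IsMonOrd lo1) :
    (∀ m n : (X × (Fin r → ℕ)) →₀ ℕ,
        hatLt loS (wfun loS m) (wfun loS n) → wlt (oLT loS) (oLT lo1) m n) ∧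
    ((∀ σ τ : Fin r → ℕ, degS σ < degS τ → oLT loS σ τ) →
      ∀ m n : (X × (Fin r → ℕ)) →₀ ℕ,
        ordFun m < ordFun n → wlt (oLT loS) (oLT lo1) m n) := by
  have hblock : ∀ (δ : Fin r → ℕ) (m : (X × (Fin r → ℕ)) →₀ ℕ),
      (∀ x : X, (x, δ) ∉ m.support) → blockAt δ m = 0 := by
    intro δ m h
    ext x
    have := h x
    simp only [Finsupp.mem_support_iff, not_not] at this
    exact this
  have main : ∀ m n : (X × (Fin r → ℕ)) →₀ ℕ,
      hatLt loS (wfun loS m) (wfun loS n) → wlt (oLT loS) (oLT lo1) m n := by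
    intro m n h
    rcases hw : wfun loS n with _ | δ
    · rw [hw] at h
      exact absurd h (@WithBot.not_lt_bot _ loS.toLT _)
    · rw [hw] at h
      have hw' : wfun loS n = (δ : WithBot (Fin r → ℕ)) := hw
      obtain ⟨⟨px, pσ⟩, hp, hpδ⟩ :=
        Finset.mem_image.1 (@Finset.mem_of_max _ loS _ _ hw')
      have hpδ' : pσ = δ := hpδ
      subst hpδ'
      have hm0 : blockAt pσ m = 0 := by
        apply hblock
        intro x hx
        have hle : hatLe loS (pσ : WithBot (Fin r → ℕ)) (wfun loS m) :=
          @Finset.le_max _ loS _ _ (Finset.mem_image.2 ⟨(x, pσ), hx, rfl⟩)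
        exact absurd (@lt_of_le_of_lt _ (@WithBot.instPreorder _ loS.toPreorder) _ _ _ hle h)
          (@lt_irrefl _ (@WithBot.instPreorder _ loS.toPreorder) _)
      have hn0 : blockAt pσ n ≠ 0 := by
        intro hcon
        have hz : blockAt pσ n px = 0 := by rw [hcon]; rfl
        exact Finsupp.mem_support_iff.1 hp hz
      refine ⟨pσ, ?_, ?_⟩
      · show lo1.lt (blockAt pσ m) (blockAt pσ n)
        rw [hm0]
        exact @lt_of_le_of_ne _ lo1.toPartialOrder _ _ (h1.zero_le _) (Ne.symm hn0)
      · intro ε hε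
        have hε' : loS.lt pσ ε := hε
        have hm : blockAt ε m = 0 := by
          apply hblock
          intro x hx
          have h2 : hatLe loS (ε : WithBot (Fin r → ℕ)) (wfun loS m) :=
            @Finset.le_max _ loS _ _ (Finset.mem_image.2 ⟨(x, ε), hx, rfl⟩)
          have h3 : hatLt loS (ε : WithBot (Fin r → ℕ)) (pσ : WithBot (Fin r → ℕ)) :=
            @lt_of_le_of_lt _ (@WithBot.instPreorder _ loS.toPreorder) _ _ _ h2 h
          have h4 : loS.lt ε pσ := (@WithBot.coe_lt_coe _ _ _ loS.toLT).1 h3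
          exact absurd h4 (@lt_asymm _ loS.toPreorder _ _ hε')
        have hn : blockAt ε n = 0 := by
          apply hblock
          intro x hx
          have h2 : hatLe loS (ε : WithBot (Fin r → ℕ)) (wfun loS n) :=
            @Finset.le_max _ loS _ _ (Finset.mem_image.2 ⟨(x, ε), hx, rfl⟩)
          rw [hw'] at h2
          have h3 : loS.le ε pσ := (@WithBot.coe_le_coe _ _ _ loS.toLE).1 h2
          exact absurd (@lt_of_lt_of_le _ loS.toPreorder _ _ _ hε' h3)
            (@lt_irrefl _ loS.toPreorder _)
        rw [hm, hn]
  refine ⟨main, fun hdeg m n h => main m n ?_⟩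
  show hatLt loS (wfun loS m) (wfun loS n)
  have hnne : n.support.Nonempty := by
    by_contra hcon
    rw [Finset.not_nonempty_iff_eq_empty] at hcon
    have hb : ordFun n = ⊥ := by simp [ordFun, hcon]
    rw [hb] at h
    exact absurd h (by simp)
  obtain ⟨δn, hδn⟩ := @Finset.max_of_nonempty _ loS _ (hnne.image (fun p => p.2))
  have hδn' : wfun loS n = (δn : WithBot (Fin r → ℕ)) := hδn
  obtain ⟨q, hq, hqδ⟩ := Finset.mem_image.1 (@Finset.mem_of_max _ loS _ _ hδn)
  have hqd : degS q.2 = degS δn := by rw [show q.2 = δn from hqδ]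
  obtain ⟨dn, hdn⟩ := Finset.max_of_nonempty (hnne.image (fun p => degS p.2))
  obtain ⟨q', hq', hq'd⟩ := Finset.mem_image.1 (Finset.mem_of_max hdn)
  have hle : hatLe loS (q'.2 : WithBot (Fin r → ℕ)) (wfun loS n) :=
    @Finset.le_max _ loS _ _ (Finset.mem_image.2 ⟨q', hq', rfl⟩)
  rw [hδn'] at hle
  have hle' : loS.le q'.2 δn := (@WithBot.coe_le_coe _ _ _ loS.toLE).1 hle
  have hdd : degS q'.2 ≤ degS δn := by
    by_contra hcon
    push_neg at hcon
    exact absurd (@lt_of_lt_of_le _ loS.toPreorder _ _ _ (hdeg _ _ hcon) hle')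
      (@lt_irrefl _ loS.toPreorder _)
  have hordn : ordFun n ≤ (degS δn : WithBot ℕ) := by
    rw [show ordFun n = (dn : WithBot ℕ) from hdn, ← hq'd]
    exact_mod_cast hdd
  by_cases hmne : m.support.Nonempty
  · obtain ⟨δm, hδm⟩ := @Finset.max_of_nonempty _ loS _ (hmne.image (fun p => p.2))
    have hδm' : wfun loS m = (δm : WithBot (Fin r → ℕ)) := hδm
    obtain ⟨pm, hpm, hpmδ⟩ := Finset.mem_image.1 (@Finset.mem_of_max _ loS _ _ hδm)
    have hpd : degS pm.2 = degS δm := by rw [show pm.2 = δm from hpmδ]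
    have hdm : (degS δm : WithBot ℕ) ≤ ordFun m :=
      Finset.le_max (Finset.mem_image.2 ⟨pm, hpm, hpd⟩)
    have hlt : (degS δm : WithBot ℕ) < (degS δn : WithBot ℕ) :=
      lt_of_le_of_lt hdm (lt_of_lt_of_le h hordn)
    have hlt' : degS δm < degS δn := by exact_mod_cast hlt
    rw [hδm', hδn']
    exact (@WithBot.coe_lt_coe _ _ _ loS.toLT).2 (hdeg _ _ hlt')
  · rw [Finset.not_nonempty_iff_eq_empty] at hmne
    have hbot : wfun loS m = ⊥ := by
      show @Finset.max _ loS (m.support.image (fun p => p.2)) = ⊥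
      rw [hmne, Finset.image_empty]
      exact @Finset.max_empty _ loS
    rw [hbot, hδn']
    exact @WithBot.bot_lt_coe _ loS.toLT _
end

section
/- The ideal N ⊆ P̄ (the largest ord-graded Σ-ideal contained in ker φ) is generated by the elements: (i) t(σ) − t(τ) for all σ, τ ∈ Σ with σ ≠ τ and deg(σ) = deg(τ); and (ii) t(σ)t(τ) − t(σ) and x(σ)t(τ) − x(σ) for all x ∈ X and all σ, τ ∈ Σ with deg(σ) ≥ deg(τ). -/
namespace St16
noncomputable section
open scoped Classical
open MvPolynomial Finsupp

variable {K : Type*} [Field K] {V : Type*} {r : ℕ}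

def gens (K V : Type*) [Field K] (r : ℕ) : Set (MvPolynomial (Option V × (Fin r → ℕ)) K) :=
  ({p | ∃ σ τ : Fin r → ℕ, σ ≠ τ ∧ degS σ = degS τ ∧
        p = MvPolynomial.X ((none : Option V), σ) - MvPolynomial.X (none, τ)} ∪
   {p | ∃ σ τ : Fin r → ℕ, degS τ ≤ degS σ ∧
        p = MvPolynomial.X ((none : Option V), σ) * MvPolynomial.X (none, τ)
          - MvPolynomial.X (none, σ)} ∪
   {p | ∃ (x : V) (σ τ : Fin r → ℕ), degS τ ≤ degS σ ∧
        p = MvPolynomial.X ((Option.some x : Option V), σ) * MvPolynomial.X (none, τ)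
          - MvPolynomial.X (Option.some x, σ)})

abbrev Jd (K V : Type*) [Field K] (r : ℕ) : Ideal (MvPolynomial (Option V × (Fin r → ℕ)) K) :=
  Ideal.span (gens K V r)

abbrev Mon (V : Type*) (r : ℕ) := ((Option V × (Fin r → ℕ)) →₀ ℕ)

def tkill (m : Mon V r) : Mon V r := m.filter (fun q => ¬ q.1 = none)
def trest (m : Mon V r) : Mon V r := m.filter (fun q => q.1 = none)

lemma trest_add_tkill (m : Mon V r) : trest m + tkill m = m :=
  filter_pos_add_filter_neg m _

lemma mem_trest_support {m : Mon V r} {p} (hp : p ∈ (trest m).support) : p.1 = none := by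
  simp only [trest, support_filter, Finset.mem_filter] at hp; exact hp.2

-- X as monomial
lemma X_eq (p : Option V × (Fin r → ℕ)) :
    (MvPolynomial.X p : MvPolynomial (Option V × (Fin r → ℕ)) K) =
      MvPolynomial.monomial (single p 1) 1 := rfl

lemma key_rel (v : Option V) (σ τ : Fin r → ℕ) (h : degS τ ≤ degS σ) :
    (MvPolynomial.X (v, σ) * MvPolynomial.X ((none : Option V), τ) - MvPolynomial.X (v, σ) :
      MvPolynomial (Option V × (Fin r → ℕ)) K) ∈ Jd K V r := by
  apply Ideal.subset_span
  cases v with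
  | none => exact Or.inl (Or.inr ⟨σ, τ, h, rfl⟩)
  | some x => exact Or.inr ⟨x, σ, τ, h, rfl⟩

lemma rel1 (σ τ : Fin r → ℕ) (h : degS σ = degS τ) :
    (MvPolynomial.X ((none : Option V), σ) - MvPolynomial.X (none, τ) :
      MvPolynomial (Option V × (Fin r → ℕ)) K) ∈ Jd K V r := by
  rcases eq_or_ne σ τ with rfl | hne
  · simp
  · exact Ideal.subset_span (Or.inl (Or.inl ⟨σ, τ, hne, h, rfl⟩))

lemma strip_one (c : Mon V r) (v : Option V) (σ τ : Fin r → ℕ) (h : degS τ ≤ degS σ) :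
    (MvPolynomial.monomial (c + single (v, σ) 1 + single ((none : Option V), τ) 1) (1 : K) -
      MvPolynomial.monomial (c + single (v, σ) 1) 1) ∈ Jd K V r := by
  have h2 := Ideal.mul_mem_left _ (MvPolynomial.monomial c (1 : K)) (key_rel v σ τ h)
  have e : MvPolynomial.monomial c (1 : K) *
      (MvPolynomial.X (v, σ) * MvPolynomial.X ((none : Option V), τ) - MvPolynomial.X (v, σ)) =
      MvPolynomial.monomial (c + single (v, σ) 1 + single ((none : Option V), τ) 1) (1 : K) -
        MvPolynomial.monomial (c + single (v, σ) 1) 1 := by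
    rw [mul_sub, X_eq, X_eq, ← mul_assoc]
    simp [MvPolynomial.monomial_mul, add_assoc]
  rwa [e] at h2

lemma decomp (s : Mon V r) (p : Option V × (Fin r → ℕ)) (hp : s p ≠ 0) :
    s = (s - single p 1) + single p 1 := by
  ext q
  rcases eq_or_ne q p with rfl | h
  · simp only [Finsupp.add_apply, tsub_apply, single_eq_same]
    omega
  · simp [Finsupp.add_apply, tsub_apply, Finsupp.single_eq_of_ne' (Ne.symm h)]

lemma support_sub_single_subset (s : Mon V r) (p : Option V × (Fin r → ℕ)) :
    (s - single p 1).support ⊆ s.support := by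
  intro q hq
  simp only [Finsupp.mem_support_iff, tsub_apply] at *
  omega

lemma sum_sub_single_lt (s : Mon V r) (p : Option V × (Fin r → ℕ)) (hp : s p ≠ 0) :
    (s - single p 1).sum (fun _ n => n) < s.sum (fun _ n => n) := by
  conv_rhs => rw [decomp s p hp]
  rw [Finsupp.sum_add_index' (fun _ => rfl) (fun _ _ _ => rfl),
    Finsupp.sum_single_index rfl]
  omega


lemma stripAll (c : Mon V r) (v : Option V) (σ : Fin r → ℕ) :
    ∀ s : Mon V r, (∀ p ∈ s.support, p.1 = (none : Option V) ∧ degS p.2 ≤ degS σ) →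
    (MvPolynomial.monomial (c + single (v, σ) 1 + s) (1 : K) -
      MvPolynomial.monomial (c + single (v, σ) 1) 1) ∈ Jd K V r := by
  suffices H : ∀ (N : ℕ) (s : Mon V r), s.sum (fun _ n => n) = N →
      (∀ p ∈ s.support, p.1 = (none : Option V) ∧ degS p.2 ≤ degS σ) →
      (MvPolynomial.monomial (c + single (v, σ) 1 + s) (1 : K) -
        MvPolynomial.monomial (c + single (v, σ) 1) 1) ∈ Jd K V r by
    exact fun s hs => H _ s rfl hs
  intro N
  induction N using Nat.strong_induction_on with
  | _ N IH =>
    intro s hN hs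
    by_cases h0 : s = 0
    · subst h0; simp only [add_zero, sub_self]; exact Ideal.zero_mem _
    · obtain ⟨p, hp⟩ := Finsupp.support_nonempty_iff.2 h0
      have hp0 : s p ≠ 0 := Finsupp.mem_support_iff.1 hp
      set s' := s - single p 1 with hs'def
      have hdec : s = s' + single p 1 := decomp s p hp0
      obtain ⟨p1, τ⟩ := p
      have hp1 : p1 = none := (hs _ hp).1
      subst hp1
      have step : (MvPolynomial.monomial (c + single (v, σ) 1 + s) (1 : K) -
          MvPolynomial.monomial (c + single (v, σ) 1 + s') 1) ∈ Jd K V r := by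
        have e1 : c + single (v, σ) 1 + s
            = (c + s') + single (v, σ) 1 + single ((none : Option V), τ) 1 := by
          rw [hdec]; abel
        have e2 : c + single (v, σ) 1 + s' = (c + s') + single (v, σ) 1 := by abel
        rw [e1, e2]
        exact strip_one (c + s') v σ τ (hs _ hp).2
      have hs'cond : ∀ p ∈ s'.support, p.1 = (none : Option V) ∧ degS p.2 ≤ degS σ :=
        fun q hq => hs q (support_sub_single_subset s _ hq)
      have hlt : s'.sum (fun _ n => n) < N := hN ▸ sum_sub_single_lt s _ hp0
      have tail := IH _ hlt s' rfl hs'cond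
      have fin := Ideal.add_mem _ step tail
      rwa [sub_add_sub_cancel] at fin

lemma ordFun_eq_bot_iff (m : Mon V r) : ordFun m = ⊥ ↔ m = 0 := by
  unfold ordFun
  rw [Finset.max_eq_bot, Finset.image_eq_empty, Finsupp.support_eq_empty]

lemma support_add_nat (a b : Mon V r) : (a + b).support = a.support ∪ b.support := by
  ext q
  simp only [Finsupp.mem_support_iff, Finset.mem_union, Finsupp.add_apply]
  omega

lemma ordFun_add (a b : Mon V r) : ordFun (a + b) = ordFun a ⊔ ordFun b := by
  unfold ordFun
  rw [support_add_nat, Finset.image_union, Finset.max_union]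

lemma ordFun_single (p : Option V × (Fin r → ℕ)) : ordFun (single p 1) = (degS p.2 : WithBot ℕ) := by
  unfold ordFun
  rw [Finsupp.support_single_ne_zero _ one_ne_zero]
  simp [Nat.cast_withBot]

lemma le_ordFun {m : Mon V r} {p} (hp : p ∈ m.support) : (degS p.2 : WithBot ℕ) ≤ ordFun m :=
  Finset.le_max (Finset.mem_image_of_mem _ hp)

lemma exists_of_ordFun {m : Mon V r} {d : ℕ} (h : ordFun m = (d : WithBot ℕ)) :
    ∃ p ∈ m.support, degS p.2 = d := by
  have := Finset.mem_of_max h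
  simpa using this

lemma ordFun_zero : ordFun (0 : Mon V r) = ⊥ := (ordFun_eq_bot_iff 0).2 rfl


lemma exists_nat_of_ne_bot {w : WithBot ℕ} (h : w ≠ ⊥) : ∃ d : ℕ, w = (d : WithBot ℕ) := by
  cases w with
  | bot => exact absurd rfl h
  | coe d => exact ⟨d, by rw [Nat.cast_withBot]⟩

lemma reduceA (n s : Mon V r) (hs : ∀ p ∈ s.support, p.1 = (none : Option V))
    (hle : ordFun s ≤ ordFun n) :
    (MvPolynomial.monomial (n + s) (1 : K) - MvPolynomial.monomial n 1) ∈ Jd K V r := by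
  by_cases h0 : s = 0
  · subst h0; simp only [add_zero, sub_self]; exact Ideal.zero_mem _
  · have hsbot : ordFun s ≠ ⊥ := fun h => h0 ((ordFun_eq_bot_iff s).1 h)
    have hnbot : ordFun n ≠ ⊥ := fun h => hsbot (le_bot_iff.1 (h ▸ hle))
    obtain ⟨d, hd⟩ := exists_nat_of_ne_bot hnbot
    obtain ⟨q, hq, hdq⟩ := exists_of_ordFun hd
    have hq0 : n q ≠ 0 := Finsupp.mem_support_iff.1 hq
    have hcond : ∀ p ∈ s.support, p.1 = (none : Option V) ∧ degS p.2 ≤ degS q.2 := by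
      intro p hp
      refine ⟨hs p hp, ?_⟩
      have h1 : (degS p.2 : WithBot ℕ) ≤ ordFun n := le_trans (le_ordFun hp) hle
      rw [hd] at h1
      rw [hdq]
      exact_mod_cast h1
    have hmem := stripAll (c := n - single q 1) (v := q.1) (σ := q.2) (K := K) s hcond
    have e : n - single q 1 + single (q.1, q.2) 1 = n := by
      conv_rhs => rw [decomp n q hq0]
    rw [e] at hmem
    exact hmem

lemma cong (m m' : Mon V r) (h1 : tkill m = tkill m') (h2 : ordFun m = ordFun m') :
    (MvPolynomial.monomial m (1 : K) - MvPolynomial.monomial m' 1) ∈ Jd K V r := by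
  set n := tkill m with hn
  set s := trest m with hs
  set s' := trest m' with hs'
  have hm : m = n + s := by
    rw [hn, hs, add_comm (tkill m) (trest m)]; exact (trest_add_tkill m).symm
  have hm' : m' = n + s' := by
    rw [h1, hs', add_comm (tkill m') (trest m')]; exact (trest_add_tkill m').symm
  have hsnone : ∀ p ∈ s.support, p.1 = (none : Option V) := fun p hp => mem_trest_support hp
  have hs'none : ∀ p ∈ s'.support, p.1 = (none : Option V) := fun p hp => mem_trest_support hp
  have hordm : ordFun m = ordFun n ⊔ ordFun s := by rw [hm, ordFun_add]
  have hordm' : ordFun m' = ordFun n ⊔ ordFun s' := by rw [hm', ordFun_add]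
  rcases le_or_gt (ordFun s) (ordFun n) with hA | hB
  · have hA' : ordFun s' ≤ ordFun n := by
      by_contra hc
      push_neg at hc
      have : ordFun m' = ordFun s' := by rw [hordm']; exact sup_eq_right.2 hc.le
      have h3 : ordFun m = ordFun n := by rw [hordm]; exact sup_eq_left.2 hA
      rw [this, h3] at h2
      exact absurd (h2 ▸ hc) (lt_irrefl _)
    have r1 := reduceA (K := K) n s hsnone hA
    have r2 := reduceA (K := K) n s' hs'none hA'
    have := Ideal.sub_mem _ r1 r2
    rwa [sub_sub_sub_cancel_right, ← hm, ← hm'] at this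
  · -- top order comes from the t-part
    have hs0 : s ≠ 0 := by
      intro h
      rw [h, ordFun_zero] at hB
      exact absurd hB (not_lt_bot)
    have hordms : ordFun m = ordFun s := by rw [hordm]; exact sup_eq_right.2 hB.le
    have hB' : ordFun n < ordFun s' := by
      by_contra hc
      push_neg at hc
      have : ordFun m' = ordFun n := by rw [hordm']; exact sup_eq_left.2 hc
      rw [hordms, this] at h2
      exact absurd (h2 ▸ hB) (lt_irrefl _)
    have hordm's' : ordFun m' = ordFun s' := by rw [hordm']; exact sup_eq_right.2 hB'.le
    have hss' : ordFun s = ordFun s' := by rw [← hordms, ← hordm's', h2]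
    obtain ⟨d, hd⟩ := exists_nat_of_ne_bot (fun h => hs0 ((ordFun_eq_bot_iff s).1 h))
    obtain ⟨p, hp, hdp⟩ := exists_of_ordFun hd
    obtain ⟨p', hp', hdp'⟩ := exists_of_ordFun (hss' ▸ hd)
    have hp0 : s p ≠ 0 := Finsupp.mem_support_iff.1 hp
    have hp'0 : s' p' ≠ 0 := Finsupp.mem_support_iff.1 hp'
    have hpn : p.1 = (none : Option V) := hsnone p hp
    have hp'n : p'.1 = (none : Option V) := hs'none p' hp'
    -- reduce m to n + t(p.2)
    have red : ∀ (u : Mon V r) (q : Option V × (Fin r → ℕ)), q ∈ u.support → degS q.2 = d →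
        (∀ x ∈ u.support, x.1 = (none : Option V)) → ordFun u = (d : WithBot ℕ) →
        (MvPolynomial.monomial (n + u) (1 : K) -
          MvPolynomial.monomial (n + single ((none : Option V), q.2) 1) 1) ∈ Jd K V r := by
      intro u q hq hdq hunone hu
      have hq0 : u q ≠ 0 := Finsupp.mem_support_iff.1 hq
      have hcond : ∀ x ∈ (u - single q 1).support,
          x.1 = (none : Option V) ∧ degS x.2 ≤ degS q.2 := by
        intro x hx
        have hxu := support_sub_single_subset u q hx
        refine ⟨hunone x hxu, ?_⟩
        have h1 : (degS x.2 : WithBot ℕ) ≤ ordFun u := le_ordFun hxu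
        rw [hu] at h1
        rw [hdq]
        exact_mod_cast h1
      have hmem := stripAll (c := n) (v := (none : Option V)) (σ := q.2) (K := K)
        (u - single q 1) hcond
      have e : n + single ((none : Option V), q.2) 1 + (u - single q 1) = n + u := by
        have hq' : ((none : Option V), q.2) = q := by
          rw [← hunone q hq]
        rw [hq']
        conv_rhs => rw [decomp u q hq0]
        rw [add_assoc, add_comm (Finsupp.single q 1) (u - Finsupp.single q 1)]
      rw [e] at hmem
      exact hmem
    have r1 := red s p hp hdp hsnone hd
    have r2 := red s' p' hp' hdp' hs'none (hss' ▸ hd)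
    have hmid0 := Ideal.mul_mem_left _ (MvPolynomial.monomial n (1 : K))
      (rel1 (K := K) p.2 p'.2 (by rw [hdp, hdp']))
    have emid : MvPolynomial.monomial n (1 : K) *
        (MvPolynomial.X ((none : Option V), p.2) - MvPolynomial.X (none, p'.2)) =
        MvPolynomial.monomial (n + single ((none : Option V), p.2) 1) 1 -
          MvPolynomial.monomial (n + single ((none : Option V), p'.2) 1) 1 := by
      rw [mul_sub, X_eq, X_eq]
      simp [MvPolynomial.monomial_mul]
    rw [emid] at hmid0
    have c1 := Ideal.add_mem _ r1 hmid0
    rw [sub_add_sub_cancel] at c1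
    have c2 := Ideal.sub_mem _ c1 r2
    rwa [sub_sub_sub_cancel_right, ← hm, ← hm'] at c2

lemma tkill_add (a b : Mon V r) : tkill (a + b) = tkill a + tkill b :=
  Finsupp.filter_add

lemma phiBar_monomial (m : Mon V r) (c : K) :
    phiBar K (MvPolynomial.monomial m c) = MvPolynomial.monomial (tkill m) c := by
  induction m using Finsupp.induction with
  | zero =>
    have : tkill (0 : Mon V r) = 0 := Finsupp.filter_zero _
    rw [this]
    rw [MvPolynomial.monomial_zero']
    simp [phiBar, MvPolynomial.algebraMap_eq]
  | single_add p n m0 hpm0 hn ih =>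
    have hsplit : MvPolynomial.monomial (Finsupp.single p n + m0) c =
        MvPolynomial.monomial (Finsupp.single p n) 1 * MvPolynomial.monomial m0 c := by
      rw [MvPolynomial.monomial_mul, one_mul]
    rw [hsplit, map_mul, ih, tkill_add]
    rw [← MvPolynomial.X_pow_eq_monomial, map_pow]
    obtain ⟨v, σ⟩ := p
    cases v with
    | none =>
      have h1 : phiBar K (MvPolynomial.X ((none : Option V), σ)) = 1 := by
        simp [phiBar]
      have h2 : tkill (Finsupp.single ((none : Option V), σ) n) = 0 := by
        apply Finsupp.filter_single_of_neg
        simp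
      rw [h1, h2, one_pow, one_mul, zero_add]
    | some x =>
      have h1 : phiBar K (MvPolynomial.X ((Option.some x : Option V), σ)) =
          MvPolynomial.X (Option.some x, σ) := by
        simp [phiBar]
      have h2 : tkill (Finsupp.single ((Option.some x : Option V), σ) n) =
          Finsupp.single ((Option.some x : Option V), σ) n := by
        apply Finsupp.filter_single_of_pos
        simp
      rw [h1, h2, MvPolynomial.X_pow_eq_monomial, MvPolynomial.monomial_mul, one_mul]

lemma coeff_phiBar (f : MvPolynomial (Option V × (Fin r → ℕ)) K) (u : Mon V r) :
    MvPolynomial.coeff u (phiBar K f) =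
      ∑ m ∈ f.support, (if tkill m = u then MvPolynomial.coeff m f else 0) := by
  conv_lhs => rw [f.as_sum, map_sum]
  rw [MvPolynomial.coeff_sum]
  exact Finset.sum_congr rfl fun m _ => by rw [phiBar_monomial, MvPolynomial.coeff_monomial]

lemma main_mem (f : MvPolynomial (Option V × (Fin r → ℕ)) K)
    (hOH : IsOrdHomog f) (hphi : phiBar K f = 0) : f ∈ Jd K V r := by
  suffices H : ∀ (N : ℕ) (f : MvPolynomial (Option V × (Fin r → ℕ)) K),
      f.support.card = N → IsOrdHomog f → phiBar K f = 0 → f ∈ Jd K V r by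
    exact H _ f rfl hOH hphi
  intro N
  induction N using Nat.strong_induction_on with
  | _ N IH =>
    intro f hcard hOH hphi
    by_cases hf : f = 0
    · subst hf; exact Ideal.zero_mem _
    · obtain ⟨m, hm⟩ : f.support.Nonempty :=
        Finset.nonempty_iff_ne_empty.2 (fun h => hf (MvPolynomial.support_eq_empty.1 h))
      set c := MvPolynomial.coeff m f with hc
      have hc0 : c ≠ 0 := MvPolynomial.mem_support_iff.1 hm
      have hsum : ∑ m' ∈ f.support,
          (if tkill m' = tkill m then MvPolynomial.coeff m' f else 0) = 0 := by
        rw [← coeff_phiBar, hphi, MvPolynomial.coeff_zero]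
      obtain ⟨m', hm'mem, hm'ne, htk⟩ :
          ∃ m', m' ∈ f.support ∧ m' ≠ m ∧ tkill m' = tkill m := by
        by_contra hcon
        push_neg at hcon
        have : ∑ m' ∈ f.support,
            (if tkill m' = tkill m then MvPolynomial.coeff m' f else 0) = c := by
          rw [Finset.sum_eq_single_of_mem m hm]
          · rw [if_pos rfl]
          · intro b hb hbm
            rw [if_neg (hcon b hb hbm)]
        rw [this] at hsum
        exact hc0 hsum
      have hord : ordFun m = ordFun m' := hOH m hm m' hm'mem
      set g := f - MvPolynomial.monomial m c + MvPolynomial.monomial m' c with hg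
      have hfg : f - g = MvPolynomial.monomial m c - MvPolynomial.monomial m' c := by
        rw [hg]; ring
      have hdiffmem : f - g ∈ Jd K V r := by
        rw [hfg]
        have base := cong (K := K) m m' htk.symm hord
        have := Ideal.mul_mem_left _ (MvPolynomial.C c) base
        rw [mul_sub, MvPolynomial.C_mul_monomial, MvPolynomial.C_mul_monomial, mul_one] at this
        exact this
      have hcoeffg : ∀ q, MvPolynomial.coeff q g =
          MvPolynomial.coeff q f - (if m = q then c else 0) + (if m' = q then c else 0) := by
        intro q
        rw [hg]
        rw [MvPolynomial.coeff_add, MvPolynomial.coeff_sub,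
          MvPolynomial.coeff_monomial, MvPolynomial.coeff_monomial]
      have hsub : g.support ⊆ f.support := by
        intro q hq
        rw [MvPolynomial.mem_support_iff] at hq ⊢
        intro hq0
        apply hq
        rw [hcoeffg, hq0]
        have h1 : m ≠ q := fun h => (MvPolynomial.mem_support_iff.1 hm) (h ▸ hq0)
        have h2 : m' ≠ q := fun h => (MvPolynomial.mem_support_iff.1 hm'mem) (h ▸ hq0)
        rw [if_neg h1, if_neg h2]
        ring
      have hmnot : m ∉ g.support := by
        rw [MvPolynomial.mem_support_iff]
        push_neg
        rw [hcoeffg, if_pos rfl, if_neg hm'ne, hc]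
        ring
      have hlt : g.support.card < N := by
        rw [← hcard]
        exact Finset.card_lt_card ⟨hsub, fun hss => hmnot (hss hm)⟩
      have hOHg : IsOrdHomog g := fun a ha b hb => hOH a (hsub ha) b (hsub hb)
      have hphig : phiBar K g = 0 := by
        rw [hg, map_add, map_sub, phiBar_monomial, phiBar_monomial, hphi, htk]
        ring
      have hgmem := IH _ hlt g rfl hOHg hphig
      have := Ideal.add_mem _ hgmem hdiffmem
      rwa [add_sub_cancel] at this


lemma isOrdHomog_pair (a b : Mon V r) (f : MvPolynomial (Option V × (Fin r → ℕ)) K)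
    (hsup : f.support ⊆ {a, b}) (hab : ordFun a = ordFun b) : IsOrdHomog f := by
  intro u hu w hw
  have h1 := hsup hu
  have h2 := hsup hw
  simp only [Finset.mem_insert, Finset.mem_singleton] at h1 h2
  rcases h1 with rfl | rfl <;> rcases h2 with rfl | rfl <;> simp [hab]

lemma support_sub_pair (a b : Mon V r) :
    (MvPolynomial.monomial a (1 : K) - MvPolynomial.monomial b 1).support ⊆ {a, b} := by
  refine (MvPolynomial.support_sub _ _ _).trans ?_
  apply Finset.union_subset
  · exact (MvPolynomial.support_monomial_subset).trans (by simp)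
  · exact (MvPolynomial.support_monomial_subset).trans (by simp)

lemma gens_sub : gens K V r ⊆ {f | IsOrdHomog f ∧ phiBar K f = 0} := by
  rintro p ((⟨σ, τ, hne, hdeg, rfl⟩ | ⟨σ, τ, hdeg, rfl⟩) | ⟨x, σ, τ, hdeg, rfl⟩)
  · constructor
    · rw [X_eq, X_eq]
      apply isOrdHomog_pair (Finsupp.single ((none : Option V), σ) 1)
        (Finsupp.single ((none : Option V), τ) 1) _ (support_sub_pair _ _)
      rw [ordFun_single, ordFun_single]
      exact_mod_cast hdeg
    · simp [phiBar]
  · constructor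
    · have e : (MvPolynomial.X ((none : Option V), σ) * MvPolynomial.X (none, τ)
          - MvPolynomial.X (none, σ) : MvPolynomial (Option V × (Fin r → ℕ)) K) =
          MvPolynomial.monomial (Finsupp.single ((none : Option V), σ) 1 +
            Finsupp.single ((none : Option V), τ) 1) 1 -
          MvPolynomial.monomial (Finsupp.single ((none : Option V), σ) 1) 1 := by
        rw [X_eq, X_eq, MvPolynomial.monomial_mul, one_mul]
      rw [e]
      apply isOrdHomog_pair _ _ _ (support_sub_pair _ _)
      rw [ordFun_add, ordFun_single, ordFun_single]
      exact sup_eq_left.2 (by exact_mod_cast hdeg)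
    · simp [phiBar]
  · constructor
    · have e : (MvPolynomial.X ((Option.some x : Option V), σ) * MvPolynomial.X (none, τ)
          - MvPolynomial.X (Option.some x, σ) : MvPolynomial (Option V × (Fin r → ℕ)) K) =
          MvPolynomial.monomial (Finsupp.single ((Option.some x : Option V), σ) 1 +
            Finsupp.single ((none : Option V), τ) 1) 1 -
          MvPolynomial.monomial (Finsupp.single ((Option.some x : Option V), σ) 1) 1 := by
        rw [X_eq, X_eq, MvPolynomial.monomial_mul, one_mul]
      rw [e]
      apply isOrdHomog_pair _ _ _ (support_sub_pair _ _)
      rw [ordFun_add, ordFun_single, ordFun_single]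
      exact sup_eq_left.2 (by exact_mod_cast hdeg)
    · simp [phiBar]

lemma final (K : Type*) [Field K] (V : Type*) (r : ℕ) : Nideal K V r = Jd K V r := by
  apply le_antisymm
  · exact Ideal.span_le.2 fun f hf => main_mem f hf.1 hf.2
  · exact Ideal.span_le.2 fun p hp => Ideal.subset_span (gens_sub hp)

end
end St16


/-- The ideal `N ⊆ P̄`, the largest `ord`-graded Σ-ideal contained
in `ker φ`, is generated by: (i) `t(σ) − t(τ)` for `σ ≠ τ` with `deg σ = deg τ`;
(ii) `t(σ)t(τ) − t(σ)` and `x(σ)t(τ) − x(σ)` for `deg σ ≥ deg τ`. -/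
theorem statement_16 {K : Type*} [Field K] {X : Type*} {r : ℕ} :
    Nideal K X r = Ideal.span
      ({p | ∃ σ τ : Fin r → ℕ, σ ≠ τ ∧ degS σ = degS τ ∧
            p = MvPolynomial.X ((none : Option X), σ) - MvPolynomial.X (none, τ)} ∪
       {p | ∃ σ τ : Fin r → ℕ, degS τ ≤ degS σ ∧
            p = MvPolynomial.X ((none : Option X), σ) * MvPolynomial.X (none, τ)
              - MvPolynomial.X (none, σ)} ∪
       {p | ∃ (x : X) (σ τ : Fin r → ℕ), degS τ ≤ degS σ ∧
            p = MvPolynomial.X ((some x : Option X), σ) * MvPolynomial.X (none, τ)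
              - MvPolynomial.X (some x, σ)}) := by exact St16.final K X r
end

section
/- Let I be a Σ-ideal of P = K[X(Σ)] ⊆ P̄. Then the ord-homogenization I* of I (the largest ord-graded Σ-ideal of P̄ contained in φ⁻¹(I)) satisfies I* = ⟨f* : f ∈ I, f ≠ 0⟩ + N, where for nonzero f ∈ P with topord(f) = max of the orders of the ord-homogeneous components of f, one sets f* = f if f ∈ K and f* = t(σ)·f for any σ ∈ Σ with deg(σ) = topord(f) otherwise. -/
noncomputable section
open MvPolynomial

variable {K : Type*} [Field K] {X : Type*} {r : ℕ}

lemma embJ_inj : Function.Injective (fun p : X × (Fin r → ℕ) => ((some p.1 : Option X), p.2)) := by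
  intro a b h
  simpa [Prod.ext_iff] using h

lemma dehom_embP (f : MvPolynomial (X × (Fin r → ℕ)) K) : dehom K (embP K f) = f := by
  rw [embP, dehom, aeval_rename]
  have : (aeval fun p : X × (Fin r → ℕ) => MvPolynomial.X (p.1, p.2) :
      MvPolynomial (X × (Fin r → ℕ)) K →ₐ[K] _) = AlgHom.id K _ := by
    apply algHom_ext; intro p; simp
  simpa [Function.comp_def] using congrFun (congrArg DFunLike.coe this) f

lemma phiBar_embP (f : MvPolynomial (X × (Fin r → ℕ)) K) : phiBar K (embP K f) = embP K f := by
  rw [embP, phiBar, aeval_rename]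
  rw [show (MvPolynomial.rename (fun p : X × (Fin r → ℕ) => ((some p.1 : Option X), p.2)) :
      MvPolynomial (X × (Fin r → ℕ)) K →ₐ[K] _) = aeval (fun p : X × (Fin r → ℕ) =>
        (MvPolynomial.X ((some p.1 : Option X), p.2) : MvPolynomial (Option X × (Fin r → ℕ)) K)) by
    apply algHom_ext; intro p; simp]
  rfl

lemma phiBar_eq (g : MvPolynomial (Option X × (Fin r → ℕ)) K) :
    phiBar K g = embP K (dehom K g) := by
  have : (embP K (X:=X) (r:=r)).comp (dehom K) = (phiBar K) := by
    apply algHom_ext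
    rintro ⟨v | x, σ⟩ <;> simp [embP, dehom, phiBar]
  rw [← this]; rfl
end
noncomputable section
open MvPolynomial
open scoped Classical

variable {K : Type*} [Field K] {X : Type*} {r : ℕ}

lemma supp_add {V : Type*} (m n : (V × (Fin r → ℕ)) →₀ ℕ) :
    (m + n).support = m.support ∪ n.support := by
  ext p
  simp [Finsupp.mem_support_iff, Nat.add_eq_zero, -not_and, not_and_or]

lemma ordFun_mono {V : Type*} {m n : (V × (Fin r → ℕ)) →₀ ℕ}
    (h : m.support ⊆ n.support) : ordFun m ≤ ordFun n :=
  Finset.max_mono (Finset.image_subset_image h)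

lemma ordFun_add {V : Type*} (m n : (V × (Fin r → ℕ)) →₀ ℕ) :
    ordFun (m + n) = max (ordFun m) (ordFun n) := by
  rw [ordFun, supp_add, Finset.image_union, Finset.max_union]; rfl

lemma ordFun_single (v : Option X) (σ : Fin r → ℕ) :
    ordFun (Finsupp.single (v, σ) (1:ℕ)) = (degS σ : WithBot ℕ) := by
  rw [ordFun, Finsupp.support_single_ne_zero _ one_ne_zero]
  simp
  rfl

lemma ordFun_embMon (n : (X × (Fin r → ℕ)) →₀ ℕ) :
    ordFun (embMon (X := X) n) = ordFun n := by
  rw [ordFun, embMon, Finsupp.mapDomain_support_of_injective embJ_inj, Finset.image_image, ordFun]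
  rfl

lemma topord_embP (f : MvPolynomial (X × (Fin r → ℕ)) K) :
    topord (embP K f) = topord f := by
  classical
  rw [topord, topord, embP, support_rename_of_injective embJ_inj, Finset.sup_image]
  exact Finset.sup_congr rfl (fun n _ => ordFun_embMon n)

/-- kill the `t`-variables in a monomial -/
def killT (m : (Option X × (Fin r → ℕ)) →₀ ℕ) : (Option X × (Fin r → ℕ)) →₀ ℕ :=
  m.filter (fun p => p.1 ≠ none)

lemma killT_supp (m : (Option X × (Fin r → ℕ)) →₀ ℕ) : (killT m).support ⊆ m.support := by
  rw [killT, Finsupp.support_filter]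
  exact Finset.filter_subset _ _

lemma phiBar_monomial (m : (Option X × (Fin r → ℕ)) →₀ ℕ) (c : K) :
    phiBar K (monomial m c) = monomial (killT m) c := by
  classical
  rw [phiBar, aeval_monomial, monomial_eq]
  congr 1
  rw [Finsupp.prod, Finsupp.prod, killT, Finsupp.support_filter,
    ← Finset.prod_filter_mul_prod_filter_not m.support (fun p => p.1 ≠ none)]
  have h1 : ∀ p ∈ m.support.filter (fun p : Option X × (Fin r → ℕ) => ¬ p.1 ≠ none),
      ((p.1.elim 1 fun x => MvPolynomial.X ((some x : Option X), p.2)) :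
        MvPolynomial (Option X × (Fin r → ℕ)) K) ^ m p = 1 := by
    rintro ⟨v, σ⟩ hp
    simp only [Finset.mem_filter, not_not] at hp
    rw [hp.2]
    simp
  rw [Finset.prod_congr rfl h1, Finset.prod_const_one, mul_one]
  apply Finset.prod_congr rfl
  rintro ⟨v, σ⟩ hp
  simp only [Finset.mem_filter] at hp
  obtain ⟨x, rfl⟩ := Option.ne_none_iff_exists'.mp hp.2
  have : (Finsupp.filter (fun p : Option X × (Fin r → ℕ) => p.1 ≠ none) m) (some x, σ)
      = m (some x, σ) := Finsupp.filter_apply_pos _ _ hp.2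
  rw [this]
  rfl

lemma support_phiBar_subset (g : MvPolynomial (Option X × (Fin r → ℕ)) K) :
    (phiBar K g).support ⊆ g.support.image killT := by
  classical
  conv_lhs => rw [← support_sum_monomial_coeff g, map_sum]
  refine (MvPolynomial.support_sum).trans ?_
  intro m hm
  simp only [Finset.mem_biUnion] at hm
  obtain ⟨n, hn, hmem⟩ := hm
  rw [phiBar_monomial] at hmem
  have := support_monomial_subset hmem
  simp only [Finset.mem_singleton] at this
  exact Finset.mem_image.2 ⟨n, hn, this.symm⟩
end
noncomputable section
open MvPolynomial
open scoped Classical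

variable {K : Type*} [Field K] {X : Type*} {r : ℕ}

lemma eq_C_of_ord_bot {V : Type*} (g : MvPolynomial (V × (Fin r → ℕ)) K)
    (h : ∀ m ∈ g.support, ordFun m = ⊥) : g = MvPolynomial.C (MvPolynomial.coeff 0 g) := by
  ext n
  by_cases hn : n = 0
  · subst hn; simp
  · rw [coeff_C, if_neg (Ne.symm hn)]
    by_contra hc
    have hmem : n ∈ g.support := by rwa [mem_support_iff]
    have h2 := h n hmem
    rw [ordFun, Finset.max_eq_bot, Finset.image_eq_empty, Finsupp.support_eq_empty] at h2
    exact hn h2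

lemma phiBar_X_none (σ : Fin r → ℕ) :
    phiBar K (MvPolynomial.X ((none : Option X), σ)) = 1 := by
  rw [phiBar, aeval_X]; rfl

lemma dehom_X_none (σ : Fin r → ℕ) :
    dehom K (MvPolynomial.X ((none : Option X), σ)) = 1 := by
  rw [dehom, aeval_X]; rfl

lemma mem_supp_X_mul {σ : Fin r → ℕ} {f : MvPolynomial (X × (Fin r → ℕ)) K}
    {m : (Option X × (Fin r → ℕ)) →₀ ℕ}
    (hm : m ∈ (MvPolynomial.X ((none : Option X), σ) * embP K f).support) :
    ∃ n ∈ f.support, m = Finsupp.single ((none : Option X), σ) 1 + embMon n := by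
  rw [support_X_mul] at hm
  obtain ⟨m', hm', rfl⟩ := Finset.mem_map.1 hm
  rw [embP, support_rename_of_injective embJ_inj] at hm'
  obtain ⟨n, hn, rfl⟩ := Finset.mem_image.1 hm'
  exact ⟨n, hn, rfl⟩

lemma ordFun_mem_star {σ : Fin r → ℕ} {f : MvPolynomial (X × (Fin r → ℕ)) K}
    (hσ : topord f ≤ (degS σ : WithBot ℕ)) {m : (Option X × (Fin r → ℕ)) →₀ ℕ}
    (hm : m ∈ (MvPolynomial.X ((none : Option X), σ) * embP K f).support) :
    ordFun m = (degS σ : WithBot ℕ) := by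
  obtain ⟨n, hn, rfl⟩ := mem_supp_X_mul hm
  rw [ordFun_add, ordFun_single, ordFun_embMon]
  have : ordFun n ≤ (degS σ : WithBot ℕ) := le_trans (Finset.le_sup hn) hσ
  exact max_eq_left this
end
section
open MvPolynomial
open scoped Classical

/-- For a Σ-ideal `I ⊆ P`, its `ord`-homogenization satisfies
`I* = ⟨f* : f ∈ I, f ≠ 0⟩ + N`, where `f* = f` for `f ∈ K` and `f* = t(σ)·f` for any
`σ ∈ Σ` with `deg σ = topord f` otherwise. -/
theorem statement_17 {K : Type*} [Field K] {X : Type*} {r : ℕ}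
    (I : Ideal (MvPolynomial (X × (Fin r → ℕ)) K))
    (hIsig : IsSigmaIdeal I) :
    Istar I = Ideal.span
      {p | ∃ f ∈ I, f ≠ 0 ∧
        (((∃ c : K, f = MvPolynomial.C c) ∧ p = embP K f) ∨
         (∃ σ : Fin r → ℕ, (degS σ : WithBot ℕ) = topord f ∧
            p = MvPolynomial.X ((none : Option X), σ) * embP K f))}
      + Nideal K X r := by
  classical
  set S : Set (MvPolynomial (Option X × (Fin r → ℕ)) K) :=
    {p | ∃ f ∈ I, f ≠ 0 ∧
        (((∃ c : K, f = MvPolynomial.C c) ∧ p = embP K f) ∨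
         (∃ σ : Fin r → ℕ, (degS σ : WithBot ℕ) = topord f ∧
            p = MvPolynomial.X ((none : Option X), σ) * embP K f))} with hS
  rw [Submodule.add_eq_sup]
  apply le_antisymm
  · rw [Istar, Ideal.span_le]
    rintro g ⟨hOH, hfI⟩
    by_cases hf0 : dehom K g = 0
    · exact Submodule.mem_sup_right (Ideal.subset_span
        ⟨hOH, by rw [phiBar_eq, hf0, map_zero]⟩)
    set f := dehom K g with hf
    have hg0 : g ≠ 0 := by rintro rfl; exact hf0 (map_zero _)
    obtain ⟨m₀, hm₀⟩ := MvPolynomial.support_nonempty.2 hg0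
    have hcomm : ∀ m ∈ g.support, ordFun m = ordFun m₀ := fun m hm => hOH m hm m₀ hm₀
    have hbnd : ∀ n ∈ f.support, ordFun n ≤ ordFun m₀ := by
      intro n hn
      have h1 : embMon n ∈ (phiBar K g).support := by
        rw [phiBar_eq, ← hf, embP, support_rename_of_injective embJ_inj]
        exact Finset.mem_image_of_mem _ hn
      obtain ⟨m, hm, hkm⟩ := Finset.mem_image.1 (support_phiBar_subset g h1)
      calc ordFun n = ordFun (embMon n) := (ordFun_embMon n).symm
        _ = ordFun (killT m) := by rw [hkm]
        _ ≤ ordFun m := ordFun_mono (killT_supp m)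
        _ = ordFun m₀ := hcomm m hm
    have htop : topord f ≤ ordFun m₀ := Finset.sup_le hbnd
    cases hd : ordFun m₀ with
    | bot =>
      have hgC : g = MvPolynomial.C (MvPolynomial.coeff 0 g) :=
        eq_C_of_ord_bot g (fun m hm => (hcomm m hm).trans hd)
      have hfC : f = MvPolynomial.C (MvPolynomial.coeff 0 g) := by
        rw [hf, hgC]
        simp [dehom]
      refine Submodule.mem_sup_left (Ideal.subset_span ?_)
      refine ⟨f, hfI, hf0, Or.inl ⟨⟨_, hfC⟩, ?_⟩⟩
      rw [hfC, embP]
      rw [rename_C]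
      exact hgC
    | coe k =>
      have hd' : ordFun m₀ = (k : WithBot ℕ) := by rw [hd]; rfl
      -- extract σ with degS σ = k
      have hmem : k ∈ m₀.support.image (fun p => degS p.2) := Finset.mem_of_max hd
      obtain ⟨p₀, _, hp₀⟩ := Finset.mem_image.1 hmem
      set σ : Fin r → ℕ := p₀.2 with hσdef
      by_cases htc : topord f = ⊥
      · -- f is a nonzero constant, so I = ⊤ and the RHS is everything
        obtain ⟨c, hfC⟩ : ∃ c, f = MvPolynomial.C c :=
          ⟨_, eq_C_of_ord_bot f (fun n hn => le_bot_iff.1 (htc ▸ Finset.le_sup hn))⟩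
        have hc0 : c ≠ 0 := fun h => hf0 (by rw [hfC, h, map_zero])
        have h1I : (1 : MvPolynomial (X × (Fin r → ℕ)) K) ∈ I := by
          have hmul := I.mul_mem_left (MvPolynomial.C c⁻¹) hfI
          rw [hfC, ← MvPolynomial.C_mul, inv_mul_cancel₀ hc0, MvPolynomial.C_1] at hmul
          exact hmul
        have h1S : (1 : MvPolynomial (Option X × (Fin r → ℕ)) K) ∈ Ideal.span S := by
          apply Ideal.subset_span
          exact ⟨1, h1I, one_ne_zero, Or.inl ⟨⟨1, MvPolynomial.C_1.symm⟩, by simp [embP]⟩⟩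
        have : Ideal.span S ⊔ Nideal K X r = ⊤ := by
          rw [Ideal.eq_top_iff_one]
          exact Submodule.mem_sup_left h1S
        rw [this]; trivial
      · obtain ⟨j, hj⟩ : ∃ j : ℕ, topord f = (j : WithBot ℕ) := by
          cases hv : topord f with
          | bot => exact absurd hv htc
          | coe j => exact ⟨j, rfl⟩
        -- extract σ' with degS σ' = j
        obtain ⟨n₁, hn₁, hn₁v⟩ := Finset.exists_mem_eq_sup f.support
          (MvPolynomial.support_nonempty.2 hf0) (fun m => ordFun m)
        have hjm : j ∈ n₁.support.image (fun p => degS p.2) := by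
          apply Finset.mem_of_max
          rw [show (n₁.support.image (fun p => degS p.2)).max = ordFun n₁ from rfl,
            ← hn₁v, ← topord, hj]
          rfl
        obtain ⟨p₁, _, hp₁⟩ := Finset.mem_image.1 hjm
        have hσ' : (degS p₁.2 : WithBot ℕ) = topord f := by rw [hp₁, hj]
        set s : MvPolynomial (Option X × (Fin r → ℕ)) K :=
          MvPolynomial.X ((none : Option X), p₁.2) * embP K f with hsdef
        have hsS : s ∈ Ideal.span S :=
          Ideal.subset_span ⟨f, hfI, hf0, Or.inr ⟨p₁.2, hσ', rfl⟩⟩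
        have hkd : (degS σ : WithBot ℕ) = (k : WithBot ℕ) := by rw [hσdef, hp₀]
        have hbig : g - MvPolynomial.X ((none : Option X), σ) * s ∈ Nideal K X r := by
          apply Ideal.subset_span
          constructor
          · -- ord-homogeneous of order k
            have key : ∀ m ∈ (g - MvPolynomial.X ((none : Option X), σ) * s).support,
                ordFun m = (k : WithBot ℕ) := by
              intro m hm
              have hm' := MvPolynomial.support_sub _ g _ hm
              rcases Finset.mem_union.1 hm' with h | h
              · rw [hcomm m h, hd']
              · -- m ∈ supp (X σ * (X σ' * embP f))
                rw [hsdef, support_X_mul] at h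
                obtain ⟨m', hmm, rfl⟩ := Finset.mem_map.1 h
                have hord' : ordFun m' = (degS p₁.2 : WithBot ℕ) :=
                  ordFun_mem_star (le_of_eq hσ'.symm) hmm
                rw [show (addLeftEmbedding (Finsupp.single ((none : Option X), σ) 1)) m'
                    = Finsupp.single ((none : Option X), σ) 1 + m' from rfl,
                  ordFun_add, ordFun_single, hord', hkd]
                apply max_eq_left
                rw [hσ', ← hd']
                exact htop
            intro m hm n hn
            rw [key m hm, key n hn]
          · rw [map_sub, map_mul, phiBar_X_none, one_mul, hsdef, map_mul, phiBar_X_none,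
              one_mul, phiBar_embP, phiBar_eq, ← hf, sub_self]
        have hgeq : g = MvPolynomial.X ((none : Option X), σ) * s
            + (g - MvPolynomial.X ((none : Option X), σ) * s) := by ring
        rw [hgeq]
        exact Submodule.add_mem _
          (Submodule.mem_sup_left (Ideal.mul_mem_left _ _ hsS))
          (Submodule.mem_sup_right hbig)
  · apply sup_le
    · rw [Ideal.span_le]
      rintro p ⟨f, hfI, hf0, hp⟩
      rcases hp with ⟨⟨c, hc⟩, rfl⟩ | ⟨σ, hσ, rfl⟩
      · apply Ideal.subset_span
        refine ⟨?_, by rw [dehom_embP]; exact hfI⟩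
        intro m hm n hn
        rw [hc] at hm hn
        rw [embP, rename_C, MvPolynomial.C_apply] at hm hn
        have hm0 := support_monomial_subset hm
        have hn0 := support_monomial_subset hn
        simp only [Finset.mem_singleton] at hm0 hn0
        rw [hm0, hn0]
      · apply Ideal.subset_span
        refine ⟨?_, by rw [map_mul, dehom_X_none, one_mul, dehom_embP]; exact hfI⟩
        intro m hm n hn
        rw [ordFun_mem_star (le_of_eq hσ.symm) hm, ordFun_mem_star (le_of_eq hσ.symm) hn]
    · rw [Nideal, Istar]
      apply Ideal.span_mono
      rintro h ⟨hOH, hker⟩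
      refine ⟨hOH, ?_⟩
      have h2 : embP K (dehom K h) = 0 := by rw [← phiBar_eq, hker]
      have h0 : dehom K h = 0 := by
        apply MvPolynomial.rename_injective _ embJ_inj
        rw [map_zero]
        exact h2
      rw [h0]; exact I.zero_mem

end
end
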